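/- arXiv:2203.14997 — 5 statements merged into one kernel-verified Lean document; each statement's English description precedes it below -/
import Mathlib

section
/- Let S be a GPT state space in ℝ^{d+1} and 𝓔 a GPT effect space for S that is noisy unrestricted, meaning that for every e ∈ E(S) there exists 0 < p ≤ 1 with p·e ∈ 𝓔. If every extreme point of S is an exposed point of S, then the GPT system (S, 𝓔) satisfies intermediate determinism. -/
namespace GPT

/-- Euclidean dot product on `Fin n → ℝ`. -/
def dot {n : ℕ} (x y : Fin n → ℝ) : ℝ := ∑ i, x i * y i

/-- The unit effect `u = (0, …, 0, 1)` in `ℝ^{d+1}`. -/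
def unit (d : ℕ) : Fin (d + 1) → ℝ := fun i => if i = Fin.last d then 1 else 0

/-- A GPT state space: a nonempty compact convex subset of `ℝ^{d+1}` whose elements all have
last coordinate equal to `1`. -/
def IsStateSpace (d : ℕ) (S : Set (Fin (d + 1) → ℝ)) : Prop :=
  S.Nonempty ∧ IsCompact S ∧ Convex ℝ S ∧ ∀ ω ∈ S, ω (Fin.last d) = 1

/-- The unrestricted effect space `E(S)` of a state space `S`. -/
def unrestricted (d : ℕ) (S : Set (Fin (d + 1) → ℝ)) : Set (Fin (d + 1) → ℝ) :=
  {e | ∀ ω ∈ S, 0 ≤ dot e ω ∧ dot e ω ≤ 1}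

/-- A GPT effect space for the state space `S`. -/
def IsEffectSpace (d : ℕ) (S E : Set (Fin (d + 1) → ℝ)) : Prop :=
  E ⊆ unrestricted d S ∧ Convex ℝ E ∧ (0 : Fin (d + 1) → ℝ) ∈ E ∧ unit d ∈ E ∧
    (∀ e ∈ E, unit d - e ∈ E) ∧ Submodule.span ℝ E = ⊤

/-- `W(𝓔)`: the set of all mathematically reasonable states for the effect space `𝓔`. -/
def W (d : ℕ) (E : Set (Fin (d + 1) → ℝ)) : Set (Fin (d + 1) → ℝ) :=
  {ω | (∀ e ∈ E, dot ω e ≤ 1) ∧ dot ω (unit d) = 1}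

/-- The actual set `A^X_ω` of `ω` in a set of effects `X`. -/
def actualSet {n : ℕ} (X : Set (Fin n → ℝ)) (ω : Fin n → ℝ) : Set (Fin n → ℝ) :=
  {e ∈ X | dot e ω = 1}

/-- An exposed face of a convex set `C`: a nonempty set of the form
`C ∩ {x : h·x = m}` with `h ≠ 0` and `h·c ≤ m` for all `c ∈ C`. -/
def IsExposedFace {n : ℕ} (C F : Set (Fin n → ℝ)) : Prop :=
  F.Nonempty ∧ ∃ (h : Fin n → ℝ) (m : ℝ), h ≠ 0 ∧ (∀ c ∈ C, dot h c ≤ m) ∧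
    F = {x ∈ C | dot h x = m}

/-- An exposed point of a convex set. -/
def IsExposedPoint {n : ℕ} (C : Set (Fin n → ℝ)) (x : Fin n → ℝ) : Prop :=
  IsExposedFace C {x}

/-- An actual face of an effect space `E`: an exposed face containing the unit effect that is
maximal among exposed faces. -/
def IsActualFace (d : ℕ) (E F : Set (Fin (d + 1) → ℝ)) : Prop :=
  IsExposedFace E F ∧ unit d ∈ F ∧ ∀ F', IsExposedFace E F' → ¬F ⊂ F'

/-- A minimal exposed face of a convex set. -/
def IsMinimalExposedFace {n : ℕ} (C M : Set (Fin n → ℝ)) : Prop :=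
  IsExposedFace C M ∧ ∀ N, IsExposedFace C N → M ∩ N = M ∨ M ∩ N = ∅

/-- Intermediate determinism: every extreme (pure) state of `S` is uniquely identified among
states in `S` by its actual set of effects in `𝓔`. -/
def IntermediateDeterminism (d : ℕ) (S E : Set (Fin (d + 1) → ℝ)) : Prop :=
  ∀ ω ∈ S.extremePoints ℝ, ∀ ω' ∈ S, actualSet E ω' = actualSet E ω → ω' = ω

end GPT

open GPT in
private lemma gpt_dot_smul {n : ℕ} (c : ℝ) (x y : Fin n → ℝ) :
    dot (c • x) y = c * dot x y := by
  simp [dot, Finset.mul_sum, mul_assoc]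

open GPT in
private lemma gpt_dot_sub {n : ℕ} (x y z : Fin n → ℝ) :
    dot (x - y) z = dot x z - dot y z := by
  simp [dot, sub_mul, Finset.sum_sub_distrib]

open GPT in
private lemma gpt_dot_unit {d : ℕ} (x : Fin (d + 1) → ℝ) :
    dot (unit d) x = x (Fin.last d) := by
  simp [dot, unit, ite_mul]

open GPT in
private lemma gpt_dot_cont {n : ℕ} (h : Fin n → ℝ) :
    Continuous fun x : Fin n → ℝ => dot h x := by
  unfold dot
  exact continuous_finset_sum _ fun i _ =>
    (continuous_const.mul (continuous_apply i))

open GPT in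
/-- A noisy unrestricted GPT system all of whose extreme states are exposed
satisfies intermediate determinism. -/
theorem stmt_7 (d : ℕ) (hd : 1 ≤ d) (S 𝓔 : Set (Fin (d + 1) → ℝ))
    (hS : IsStateSpace d S) (h𝓔 : IsEffectSpace d S 𝓔)
    (hNU : ∀ e ∈ unrestricted d S, ∃ p : ℝ, 0 < p ∧ p ≤ 1 ∧ p • e ∈ 𝓔)
    (hexp : ∀ ω ∈ S.extremePoints ℝ, IsExposedPoint S ω) :
    IntermediateDeterminism d S 𝓔 := by
  intro ω hω ω' hω' hA
  obtain ⟨hne', h, m, hhne, hle, hface⟩ := hexp ω hω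
  have hωS : ω ∈ S := hω.1
  have hωm : dot h ω = m := by
    have : ω ∈ {x ∈ S | dot h x = m} := hface ▸ rfl
    exact this.2
  obtain ⟨_, hScpt, _, hlast⟩ := hS
  obtain ⟨x₀, hx₀S, hmin⟩ := hScpt.exists_isMinOn ⟨ω, hωS⟩ (gpt_dot_cont h).continuousOn
  set α := dot h x₀ with hα
  rcases eq_or_lt_of_le (hle x₀ hx₀S) with hαm | hαm
  · -- α = m : dot h is constant m on S
    have : ω' ∈ ({ω} : Set _) := by
      rw [hface]
      refine ⟨hω', le_antisymm (hle ω' hω') ?_⟩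
      have h2 : dot h x₀ ≤ dot h ω' := hmin hω'
      linarith
    exact this
  · set t := m - α with ht
    have htpos : 0 < t := sub_pos.mpr hαm
    set e : Fin (d + 1) → ℝ := t⁻¹ • (h - α • unit d) with he
    have hdote : ∀ x ∈ S, dot e x = t⁻¹ * (dot h x - α) := by
      intro x hx
      rw [he, gpt_dot_smul, gpt_dot_sub, gpt_dot_smul, gpt_dot_unit, hlast x hx, mul_one]
    have heu : e ∈ unrestricted d S := by
      intro x hx
      rw [hdote x hx]
      constructor
      · have h1 : (0:ℝ) ≤ dot h x - α := sub_nonneg.mpr (hmin hx)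
        exact mul_nonneg (inv_nonneg.mpr htpos.le) h1
      · rw [inv_mul_le_iff₀ htpos, mul_one]
        have := hle x hx
        linarith
    have hcu : unit d - e ∈ unrestricted d S := by
      intro x hx
      have h1 := heu x hx
      rw [gpt_dot_sub, gpt_dot_unit, hlast x hx]
      constructor <;> linarith [h1.1, h1.2]
    obtain ⟨p, hp0, hp1, hpE⟩ := hNU _ hcu
    set f : Fin (d + 1) → ℝ := unit d - p • (unit d - e) with hf
    have hfE : f ∈ 𝓔 := h𝓔.2.2.2.2.1 _ hpE
    have hdotf : ∀ x ∈ S, dot f x = 1 - p * (1 - dot e x) := by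
      intro x hx
      rw [hf, gpt_dot_sub, gpt_dot_smul, gpt_dot_sub, gpt_dot_unit, hlast x hx]
    have heω : dot e ω = 1 := by
      rw [hdote ω hωS, hωm]
      field_simp
      exact ht.symm
    have hfA : f ∈ actualSet 𝓔 ω := by
      refine ⟨hfE, ?_⟩
      rw [hdotf ω hωS, heω]; ring
    have hfA' : f ∈ actualSet 𝓔 ω' := hA ▸ hfA
    have heω' : dot e ω' = 1 := by
      have := hfA'.2
      rw [hdotf ω' hω'] at this
      have hz : p * (1 - dot e ω') = 0 := by linarith
      rcases mul_eq_zero.mp hz with h' | h'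
      · exact absurd h' (ne_of_gt hp0)
      · linarith
    have hhω' : dot h ω' = m := by
      rw [hdote ω' hω'] at heω'
      have : dot h ω' - α = t := by
        field_simp at heω'
        linarith
      linarith
    have : ω' ∈ ({ω} : Set _) := by
      rw [hface]; exact ⟨hω', hhω'⟩
    exact this
end

section
/- Let H be a separable complex Hilbert space. Every propensity function v : E(H) → [0,1] admits an expression v(E) = ⟨ψ, Eψ⟩ for all E ∈ E(H) and some unit vector ψ ∈ H. -/
open scoped ComplexInnerProductSpace

namespace QT

variable {H : Type} [NormedAddCommGroup H] [InnerProductSpace ℂ H] [CompleteSpace H]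

/-- A quantum effect on `H`: a bounded self-adjoint operator `E` with `0 ≤ E ≤ I`. -/
def IsEffect (E : H →L[ℂ] H) : Prop :=
  ContinuousLinearMap.IsPositive E ∧ ContinuousLinearMap.IsPositive (1 - E)

/-- A generalized probability measure on the set of quantum effects `E(H)`:
a `[0,1]`-valued assignment with `v(I) = 1` that is countably additive on sequences of
effects whose partial sums converge in the weak operator topology to an effect. -/
def IsGPMEff (v : (H →L[ℂ] H) → ℝ) : Prop :=
  (∀ E, IsEffect E → v E ∈ Set.Icc (0 : ℝ) 1) ∧
  v 1 = 1 ∧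
  ∀ (Es : ℕ → H →L[ℂ] H) (E : H →L[ℂ] H),
    (∀ j, IsEffect (Es j)) →
    IsEffect E →
    (∀ φ ψ : H, Filter.Tendsto (fun N => ⟪φ, (∑ j ∈ Finset.range N, Es j) ψ⟫)
      Filter.atTop (nhds ⟪φ, E ψ⟫)) →
    HasSum (fun j => v (Es j)) (v E)

/-- A propensity function on `E(H)`: a generalized probability measure uniquely determined
(among generalized probability measures, as a map on `E(H)`) by its actual set
`A_v = {E : v E = 1}`. -/
def IsPropensityEff (v : (H →L[ℂ] H) → ℝ) : Prop :=
  IsGPMEff v ∧ ∀ v', IsGPMEff v' →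
    {E | IsEffect E ∧ v' E = 1} = {E | IsEffect E ∧ v E = 1} →
    ∀ E, IsEffect E → v' E = v E

end QT

set_option synthInstance.maxHeartbeats 1000000
set_option maxHeartbeats 1000000
set_option linter.unusedSectionVars false

open ContinuousLinearMap Filter

namespace QT

variable {H : Type} [NormedAddCommGroup H] [InnerProductSpace ℂ H] [CompleteSpace H]

lemma re_inner_smul_left (c:ℝ) (x y : H) :
    RCLike.re (inner ℂ (c • x) y) = c * RCLike.re (inner ℂ x y) := by
  rw [RCLike.real_smul_eq_coe_smul (K := ℂ), inner_smul_left]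
  simp

lemma re_inner_smul_right (c:ℝ) (x y : H) :
    RCLike.re (inner ℂ x (c • y)) = c * RCLike.re (inner ℂ x y) := by
  rw [inner_re_symm, re_inner_smul_left, inner_re_symm]

lemma isEffect_zero : IsEffect (0 : H →L[ℂ] H) := by
  refine ⟨isPositive_zero, ?_⟩; simpa using isPositive_one

lemma isEffect_one : IsEffect (1 : H →L[ℂ] H) := by
  refine ⟨isPositive_one, ?_⟩; simpa using isPositive_zero

lemma isPositive_smul {c : ℝ} (hc : 0 ≤ c) {T : H →L[ℂ] H} (hT : T.IsPositive) :
    (c • T).IsPositive := by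
  have hsa : IsSelfAdjoint (c • T) := by
    rw [IsSelfAdjoint, star_smul, star_trivial, hT.isSelfAdjoint.star_eq]
  refine isPositive_def'.mpr ⟨hsa, fun x => ?_⟩
  have : (c • T) x = (c : ℝ) • T x := by simp
  rw [reApplyInnerSelf, this, re_inner_smul_left]
  have := hT.2 x
  rw [reApplyInnerSelf] at this
  exact mul_nonneg hc this

lemma isEffect_smul {c : ℝ} (hc0 : 0 ≤ c) (hc1 : c ≤ 1) {T : H →L[ℂ] H} (hT : IsEffect T) :
    IsEffect (c • T) := by
  refine ⟨isPositive_smul hc0 hT.1, ?_⟩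
  have key : 1 - c • T = c • (1 - T) + (1 - c) • (1 : H →L[ℂ] H) := by
    rw [smul_sub, sub_smul, one_smul]; abel
  rw [key]
  exact (isPositive_smul hc0 hT.2).add (isPositive_smul (by linarith) isPositive_one)

lemma isEffect_sub {E F : H →L[ℂ] H} (hE : IsEffect E) (hF : IsEffect F)
    (h : (E - F).IsPositive) : IsEffect (E - F) := by
  refine ⟨h, ?_⟩
  have key : 1 - (E - F) = (1 - E) + F := by abel
  rw [key]; exact hE.2.add hF.1

lemma isEffect_add {E F : H →L[ℂ] H} (hE : IsEffect E) (hF : IsEffect F)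
    (h : (1 - (E + F)).IsPositive) : IsEffect (E + F) :=
  ⟨hE.1.add hF.1, h⟩

lemma norm_effect_le_one {F : H →L[ℂ] H} (hF : IsEffect F) : ‖F‖ ≤ 1 := by
  have h1 : (0:H →L[ℂ] H) ≤ F := (ContinuousLinearMap.nonneg_iff_isPositive F).2 hF.1
  have h2' : F ≤ 1 := by rw [ContinuousLinearMap.le_def]; exact hF.2
  calc ‖F‖ ≤ ‖(1:H →L[ℂ] H)‖ := CStarAlgebra.norm_le_norm_of_nonneg_of_le h1 h2'
    _ ≤ 1 := by rw [ContinuousLinearMap.one_def]; exact ContinuousLinearMap.norm_id_le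

section GPM

variable {v : (H →L[ℂ] H) → ℝ} (hv : IsGPMEff v)
include hv

lemma gpm_nonneg {E : H →L[ℂ] H} (hE : IsEffect E) : 0 ≤ v E := (hv.1 E hE).1

lemma gpm_le_one {E : H →L[ℂ] H} (hE : IsEffect E) : v E ≤ 1 := (hv.1 E hE).2

lemma gpm_zero : v 0 = 0 := by
  have h := hv.2.2 (fun _ => 0) 0 (fun _ => isEffect_zero) isEffect_zero
    (by intro φ ψ; simp)
  have h2 : Tendsto (fun _ : ℕ => v 0) atTop (nhds 0) := h.summable.tendsto_atTop_zero
  exact (tendsto_nhds_unique h2 tendsto_const_nhds).symm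

lemma gpm_add {E F : H →L[ℂ] H} (hE : IsEffect E) (hF : IsEffect F)
    (hEF : IsEffect (E + F)) : v (E + F) = v E + v F := by
  classical
  set Es : ℕ → H →L[ℂ] H := fun j => if j = 0 then E else if j = 1 then F else 0 with hEs
  have hEsEff : ∀ j, IsEffect (Es j) := by
    intro j
    rcases j with _ | _ | j <;> simp [hEs, isEffect_zero, hE, hF]
  have hsum : ∀ N, 2 ≤ N → ∑ j ∈ Finset.range N, Es j = E + F := by
    intro N hN
    induction N with
    | zero => omega
    | succ n ih =>
      rcases Nat.lt_or_ge n 2 with hn | hn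
      · interval_cases n
        · omega
        · simp [Finset.sum_range_succ, hEs]
      · rw [Finset.sum_range_succ, ih hn]
        have : Es n = 0 := by
          have h0 : n ≠ 0 := by omega
          have h1 : n ≠ 1 := by omega
          simp [hEs, h0, h1]
        rw [this, add_zero]
  have h := hv.2.2 Es (E + F) hEsEff hEF ?_
  · have h2 : HasSum (fun j => v (Es j)) (∑ j ∈ Finset.range 2, v (Es j)) := by
      apply hasSum_sum_of_ne_finset_zero
      intro b hb
      have h0 : b ≠ 0 := by intro hb0; subst hb0; simp at hb
      have h1 : b ≠ 1 := by intro hb1; subst hb1; simp at hb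
      simp [hEs, h0, h1, gpm_zero hv]
    have := h.unique h2
    rw [this]
    simp [Finset.sum_range_succ, hEs]
  · intro φ ψ
    apply Tendsto.congr' _ tendsto_const_nhds
    filter_upwards [eventually_ge_atTop 2] with N hN
    rw [hsum N hN]

lemma gpm_mono {E F : H →L[ℂ] H} (hE : IsEffect E) (hF : IsEffect F)
    (h : (F - E).IsPositive) : v E ≤ v F := by
  have hFE : IsEffect (F - E) := isEffect_sub hF hE h
  have : v F = v E + v (F - E) := by
    have := gpm_add hv hE hFE (by simpa using hF)
    simpa using this
  have h0 := gpm_nonneg hv hFE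
  linarith

lemma gpm_half {E : H →L[ℂ] H} (hE : IsEffect E) : v E = 2 * v ((2⁻¹ : ℝ) • E) := by
  have hhalf : IsEffect ((2⁻¹ : ℝ) • E) := isEffect_smul (by norm_num) (by norm_num) hE
  have hsum : (2⁻¹ : ℝ) • E + (2⁻¹ : ℝ) • E = E := by
    rw [← add_smul]; norm_num
  have := gpm_add hv hhalf hhalf (by rw [hsum]; exact hE)
  rw [hsum] at this
  linarith

lemma gpm_pow {k : ℕ} {E : H →L[ℂ] H} (hE : IsEffect E) :
    v E = 2 ^ k * v (((2⁻¹ : ℝ) ^ k) • E) := by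
  induction k generalizing E with
  | zero => simp
  | succ n ih =>
    have h1 := gpm_half hv hE
    have hhalf : IsEffect ((2⁻¹ : ℝ) • E) := isEffect_smul (by norm_num) (by norm_num) hE
    have h2 := ih hhalf
    rw [h1, h2, smul_smul]
    ring_nf

end GPM


-- selfadjoint symmetric move
lemma sa_inner_move {T : H →L[ℂ] H} (hT : IsSelfAdjoint T) (x y : H) :
    (⟪T x, y⟫ : ℂ) = ⟪x, T y⟫ := by
  have := (ContinuousLinearMap.isSelfAdjoint_iff_isSymmetric.mp hT) x y
  exact this

/-- A positive operator with vanishing expectation at `ψ` kills `ψ`. -/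
lemma pos_apply_eq_zero {F : H →L[ℂ] H} (hF : F.IsPositive) {ψ : H}
    (h : RCLike.re (⟪F ψ, ψ⟫ : ℂ) = 0) : F ψ = 0 := by
  set b : ℝ := ‖F ψ‖ ^ 2 with hb
  set a : ℝ := RCLike.re (⟪F (F ψ), F ψ⟫ : ℂ) with ha
  have ha0 : 0 ≤ a := hF.2 (F ψ)
  have key : ∀ t : ℝ, 0 ≤ t ^ 2 * a + 2 * t * b := by
    intro t
    have h0 := hF.2 (ψ + t • F ψ)
    rw [reApplyInnerSelf] at h0
    have hexp : F (ψ + t • F ψ) = F ψ + t • F (F ψ) := by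
      rw [RCLike.real_smul_eq_coe_smul (K := ℂ), map_add, map_smul,
        ← RCLike.real_smul_eq_coe_smul (K := ℂ)]
    rw [hexp] at h0
    rw [inner_add_left, inner_add_right, inner_add_right] at h0
    rw [map_add, map_add, map_add] at h0
    have e1 : RCLike.re (⟪F ψ, t • F ψ⟫ : ℂ) = t * b := by
      rw [inner_re_symm, re_inner_smul_left]
      rw [hb, inner_re_symm]
      rw [← @inner_self_eq_norm_sq ℂ]
    have e2 : RCLike.re (⟪t • F (F ψ), ψ⟫ : ℂ) = t * b := by
      rw [re_inner_smul_left]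
      have : (⟪F (F ψ), ψ⟫ : ℂ) = ⟪F ψ, F ψ⟫ := by
        rw [sa_inner_move hF.isSelfAdjoint (F ψ) ψ]
      rw [this]
      rw [hb, ← @inner_self_eq_norm_sq ℂ]
    have e3 : RCLike.re (⟪t • F (F ψ), t • F ψ⟫ : ℂ) = t ^ 2 * a := by
      rw [re_inner_smul_left, inner_re_symm, re_inner_smul_left, inner_re_symm, ← ha]
      ring
    rw [e1, e2, e3, h] at h0
    linarith
  have hb0 : 0 ≤ b := by positivity
  have hbz : b = 0 := by
    set t : ℝ := b / (a + 1) with htdef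
    have hA : (0:ℝ) < a + 1 := by linarith
    have ht : t * (a + 1) = b := div_mul_cancel₀ b hA.ne'
    have hk := key (-t)
    nlinarith [sq_nonneg t, ha0]
  have : ‖F ψ‖ = 0 := by
    have : ‖F ψ‖ ^ 2 = 0 := hbz
    exact pow_eq_zero_iff two_ne_zero |>.mp this
  exact norm_eq_zero.mp this


lemma resolvent_pack {G : H →L[ℂ] H} (hG : G.IsPositive) {c : ℝ} (hc : 0 ≤ c) :
    ∃ R : H →L[ℂ] H, (1 + c • G) * R = 1 ∧ R * (1 + c • G) = 1 ∧ R * G = G * R ∧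
      R.IsPositive ∧ (∀ x, ‖R x‖ ≤ ‖x‖) := by
  set A : H →L[ℂ] H := 1 + c • G with hA
  have hAsa : IsSelfAdjoint A := by
    have : IsSelfAdjoint (c • G) := by
      rw [IsSelfAdjoint, star_smul, star_trivial, hG.isSelfAdjoint.star_eq]
    rw [hA, IsSelfAdjoint, star_add, star_one, this.star_eq]
  have hAx : ∀ x : H, A x = x + c • G x := by
    intro x; simp [hA]
  have hlow : ∀ x : H, ‖x‖ ^ 2 ≤ RCLike.re (⟪A x, x⟫ : ℂ) := by
    intro x
    rw [hAx, inner_add_left, map_add, re_inner_smul_left]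
    have h1 : RCLike.re (⟪x, x⟫ : ℂ) = ‖x‖ ^ 2 := by
      rw [← @inner_self_eq_norm_sq ℂ]
    nlinarith [hG.2 x, hG.re_inner_nonneg_left x]
  have hunit : IsUnit A := by
    apply isUnit_of_forall_le_norm_inner_map A (c := 1) one_pos
    intro x
    calc ‖x‖ ^ 2 * (1:NNReal) = ‖x‖ ^ 2 := by simp
    _ ≤ RCLike.re (⟪A x, x⟫ : ℂ) := hlow x
    _ ≤ ‖(⟪A x, x⟫ : ℂ)‖ := RCLike.re_le_norm _
  obtain ⟨u, hu⟩ := hunit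
  set R : H →L[ℂ] H := ↑u⁻¹ with hR
  have hAR : A * R = 1 := by rw [← hu, hR]; exact u.mul_inv
  have hRA : R * A = 1 := by rw [← hu, hR]; exact u.inv_mul
  have hGA : G * A = A * G := by
    rw [hA, mul_add, add_mul, mul_one, one_mul, mul_smul_comm, smul_mul_assoc]
  have hcomm : R * G = G * R := by
    calc R * G = R * G * (A * R) := by rw [hAR, mul_one]
    _ = R * (G * A) * R := by noncomm_ring
    _ = R * (A * G) * R := by rw [hGA]
    _ = (R * A) * (G * R) := by noncomm_ring
    _ = G * R := by rw [hRA, one_mul]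
  have hARx : ∀ x : H, A (R x) = x := by
    intro x
    have : (A * R) x = (1 : H →L[ℂ] H) x := by rw [hAR]
    simpa [ContinuousLinearMap.mul_apply] using this
  have hRsa : IsSelfAdjoint R := by
    have h1 : star R * A = 1 := by
      calc star R * A = star R * star A := by rw [hAsa.star_eq]
      _ = star (A * R) := by rw [star_mul]
      _ = 1 := by rw [hAR, star_one]
    calc star R = star R * (A * R) := by rw [hAR, mul_one]
    _ = (star R * A) * R := by noncomm_ring
    _ = R := by rw [h1, one_mul]
  have hRpos : R.IsPositive := by
    refine isPositive_def'.mpr ⟨hRsa, fun x => ?_⟩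
    rw [reApplyInnerSelf]
    have : RCLike.re (⟪R x, x⟫ : ℂ) = RCLike.re (⟪R x, A (R x)⟫ : ℂ) := by rw [hARx]
    rw [this, hAx, inner_add_right, map_add, re_inner_smul_right]
    have h1 : 0 ≤ RCLike.re (⟪R x, R x⟫ : ℂ) := inner_self_nonneg
    have h2 : 0 ≤ RCLike.re (⟪R x, G (R x)⟫ : ℂ) := hG.re_inner_nonneg_right (R x)
    nlinarith
  have hnorm : ∀ x : H, ‖R x‖ ≤ ‖x‖ := by
    intro x
    rcases eq_or_lt_of_le (norm_nonneg (R x)) with h0 | h0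
    · rw [← h0]; exact norm_nonneg x
    have key : ‖R x‖ ^ 2 ≤ ‖x‖ * ‖R x‖ := by
      calc ‖R x‖ ^ 2 ≤ RCLike.re (⟪A (R x), R x⟫ : ℂ) := hlow (R x)
      _ = RCLike.re (⟪x, R x⟫ : ℂ) := by rw [hARx]
      _ ≤ ‖(⟪x, R x⟫ : ℂ)‖ := RCLike.re_le_norm _
      _ ≤ ‖x‖ * ‖R x‖ := norm_inner_le_norm x (R x)
    nlinarith [key, h0]
  exact ⟨R, hAR, hRA, hcomm, hRpos, hnorm⟩


/-- Main kernel lemma: a null effect of a GPM has nontrivial kernel. -/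
lemma exists_ker_ne_zero {v : (H →L[ℂ] H) → ℝ} (hv : IsGPMEff v)
    {G : H →L[ℂ] H} (hG : IsEffect G) (hvG : v G = 0) :
    ∃ x : H, x ≠ 0 ∧ G x = 0 := by
  by_contra hcon
  push_neg at hcon
  have hinj : ∀ x : H, G x = 0 → x = 0 := by
    intro x hx
    by_contra hx0
    exact hcon x hx0 hx
  clear hcon
  -- the scalars
  set c : ℕ → ℝ := fun n => 2 ^ n with hc
  have hc0 : ∀ n, (0:ℝ) ≤ c n := fun n => by positivity
  -- resolvents
  have hpack := fun n => resolvent_pack hG.1 (hc0 n)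
  choose R hAR hRA hcomm hRpos hRnorm using hpack
  set A : ℕ → H →L[ℂ] H := fun n => 1 + c n • G with hAdef
  -- pointwise facts
  have hAx : ∀ n (x : H), A n x = x + c n • G x := by
    intro n x; simp [hAdef]
  have hARx : ∀ n (x : H), A n (R n x) = x := by
    intro n x
    have : (A n * R n) x = (1 : H →L[ℂ] H) x := by rw [hAR n]
    simpa [ContinuousLinearMap.mul_apply] using this
  have hRAx : ∀ n (x : H), R n (A n x) = x := by
    intro n x
    have : (R n * A n) x = (1 : H →L[ℂ] H) x := by rw [hRA n]
    simpa [ContinuousLinearMap.mul_apply] using this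
  have hcommx : ∀ n (x : H), R n (G x) = G (R n x) := by
    intro n x
    have : (R n * G) x = (G * R n) x := by rw [hcomm n]
    simpa [ContinuousLinearMap.mul_apply] using this
  -- h n = 1 - R n
  set h : ℕ → H →L[ℂ] H := fun n => 1 - R n with hhdef
  have hsurj : ∀ n (x : H), ∃ y, x = A n y := fun n x => ⟨R n x, (hARx n x).symm⟩
  -- (G * R n) is positive, pointwise form
  have hGR : ∀ n (w : H), 0 ≤ RCLike.re (⟪R n (G w), w⟫ : ℂ) := by
    intro n w
    obtain ⟨y, rfl⟩ := hsurj n w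
    have e1 : R n (G (A n y)) = G y := by
      rw [hcommx n (A n y), hRAx n y]
    rw [e1, hAx, inner_add_right]
    rw [map_add, re_inner_smul_right]
    have h1 : 0 ≤ RCLike.re (⟪G y, y⟫ : ℂ) := hG.1.2 y
    have h2 : 0 ≤ RCLike.re (⟪G y, G y⟫ : ℂ) := inner_self_nonneg
    nlinarith [hc0 n]
  -- h n is an effect, and h n x = c n • R n (G x)
  have hhx : ∀ n (x : H), h n x = c n • R n (G x) := by
    intro n x
    have e0 : R n x + c n • G (R n x) = x := by rw [← hAx]; exact hARx n x
    calc h n x = x - R n x := by simp [hhdef]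
    _ = (R n x + c n • G (R n x)) - R n x := by rw [e0]
    _ = c n • G (R n x) := add_sub_cancel_left _ _
    _ = c n • R n (G x) := by rw [hcommx]
  have hhpos : ∀ n, (h n).IsPositive := by
    intro n
    have hsa : IsSelfAdjoint (h n) := by
      have : IsSelfAdjoint (R n) := (hRpos n).isSelfAdjoint
      rw [hhdef]
      simpa using (IsSelfAdjoint.one (R := H →L[ℂ] H)).sub this
    refine isPositive_def'.mpr ⟨hsa, fun x => ?_⟩
    rw [reApplyInnerSelf, hhx, re_inner_smul_left]
    exact mul_nonneg (hc0 n) (hGR n x)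
  have hheff : ∀ n, IsEffect (h n) := by
    intro n
    refine ⟨hhpos n, ?_⟩
    have : (1:H →L[ℂ] H) - h n = R n := sub_sub_cancel 1 (R n)
    rw [this]; exact hRpos n
  -- (c n • G - h n) is positive
  have hdiffpos : ∀ n, (c n • G - h n).IsPositive := by
    intro n
    have hsa : IsSelfAdjoint (c n • G - h n) := by
      have h1 : IsSelfAdjoint (c n • G) := by
        rw [IsSelfAdjoint, star_smul, star_trivial, hG.1.isSelfAdjoint.star_eq]
      exact h1.sub (hhpos n).isSelfAdjoint
    refine isPositive_def'.mpr ⟨hsa, fun x => ?_⟩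
    rw [reApplyInnerSelf]
    obtain ⟨y, rfl⟩ := hsurj n x
    have e2 : R n (G (A n y)) = G y := by rw [hcommx n (A n y), hRAx n y]
    have e3 : G (A n y) = G y + c n • G (G y) := by
      rw [hAx, map_add, map_smul_of_tower]
    have e1 : (c n • G - h n) (A n y) = (c n * c n) • G (G y) := by
      calc (c n • G - h n) (A n y) = c n • G (A n y) - h n (A n y) := by simp
      _ = (c n • G y + (c n * c n) • G (G y)) - c n • G y := by
          rw [e3, hhx, e2, smul_add, smul_smul]
      _ = (c n * c n) • G (G y) := add_sub_cancel_left _ _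
    rw [e1, hAx, inner_add_right, map_add, re_inner_smul_left, re_inner_smul_left,
      re_inner_smul_right]
    have h1 : 0 ≤ RCLike.re (⟪G (G y), y⟫ : ℂ) := by
      rw [sa_inner_move hG.1.isSelfAdjoint (G y) y]; exact inner_self_nonneg
    have h2 : 0 ≤ RCLike.re (⟪G (G y), G y⟫ : ℂ) := hG.1.re_inner_nonneg_left (G y)
    have k1 : 0 ≤ c n * c n * RCLike.re (⟪G (G y), y⟫ : ℂ) :=
      mul_nonneg (mul_nonneg (hc0 n) (hc0 n)) h1
    have k2 : 0 ≤ c n * c n * (c n * RCLike.re (⟪G (G y), G y⟫ : ℂ)) :=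
      mul_nonneg (mul_nonneg (hc0 n) (hc0 n)) (mul_nonneg (hc0 n) h2)
    linarith
  -- v (h n) = 0
  have hvh : ∀ n, v (h n) = 0 := by
    intro n
    have hsn : IsEffect (((2:ℝ)⁻¹ ^ n) • h n) :=
      isEffect_smul (by positivity) (pow_le_one₀ (by norm_num) (by norm_num)) (hheff n)
    have hGsub : (G - ((2:ℝ)⁻¹ ^ n) • h n).IsPositive := by
      have hone : (2:ℝ)⁻¹ ^ n * c n = 1 := by
        rw [hc]; rw [← mul_pow]; norm_num
      have e : ((2:ℝ)⁻¹ ^ n) • (c n • G - h n) = G - ((2:ℝ)⁻¹ ^ n) • h n := by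
        rw [smul_sub, smul_smul, hone, one_smul]
      rw [← e]
      exact isPositive_smul (by positivity) (hdiffpos n)
    have hle : v (((2:ℝ)⁻¹ ^ n) • h n) ≤ 0 := hvG ▸ gpm_mono hv hsn hG hGsub
    have hge : 0 ≤ v (((2:ℝ)⁻¹ ^ n) • h n) := gpm_nonneg hv hsn
    have hz : v (((2:ℝ)⁻¹ ^ n) • h n) = 0 := le_antisymm hle hge
    rw [gpm_pow hv (hheff n), hz, mul_zero]
  -- differences are positive
  have hDpos : ∀ j, (R j - R (j+1)).IsPositive := by
    intro j
    have hsa : IsSelfAdjoint (R j - R (j+1)) := (hRpos j).isSelfAdjoint.sub (hRpos (j+1)).isSelfAdjoint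
    refine isPositive_def'.mpr ⟨hsa, fun x => ?_⟩
    rw [reApplyInnerSelf, ContinuousLinearMap.sub_apply]
    have hA1 : ∀ z : H, A (j+1) z = A j z + c j • G z := by
      intro z
      rw [hAx, hAx]
      have hcc : c (j+1) = c j + c j := by rw [hc]; ring
      rw [hcc, add_smul]
      abel
    set u := R j x with hu
    set w := R (j+1) x with hw
    have e0 : A j u = x := hARx j x
    have e1 : A (j+1) w = x := hARx (j+1) x
    have e2 : A j u = A j w + c j • G w := by rw [e0, ← e1, hA1]
    have e3 : A j (u - w) = c j • G w := by
      rw [map_sub, e2]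
      exact add_sub_cancel_left _ _
    have e4 : u - w = c j • R j (G w) := by
      have := congrArg (R j) e3
      rw [hRAx, map_smul_of_tower] at this
      exact this
    have esplit : (⟪u - w, x⟫ : ℂ) = ⟪u - w, A j (u - w)⟫ + ⟪u - w, A j w⟫ := by
      rw [← inner_add_right, ← map_add]
      congr 1
      rw [sub_add_cancel, e0]
    rw [esplit, map_add]
    have hterm1 : 0 ≤ RCLike.re (⟪u - w, A j (u - w)⟫ : ℂ) := by
      rw [hAx, inner_add_right, map_add, re_inner_smul_right]
      have ha : 0 ≤ RCLike.re (⟪u - w, u - w⟫ : ℂ) := inner_self_nonneg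
      have hb : 0 ≤ RCLike.re (⟪u - w, G (u - w)⟫ : ℂ) := hG.1.re_inner_nonneg_right (u - w)
      nlinarith [hc0 j]
    have hterm2 : 0 ≤ RCLike.re (⟪u - w, A j w⟫ : ℂ) := by
      rw [e4, re_inner_smul_left, hAx, inner_add_right, map_add, re_inner_smul_right]
      have ha : 0 ≤ RCLike.re (⟪R j (G w), w⟫ : ℂ) := hGR j w
      have hb : 0 ≤ RCLike.re (⟪R j (G w), G w⟫ : ℂ) := (hRpos j).re_inner_nonneg_left (G w)
      have k1 : 0 ≤ c j * RCLike.re (⟪R j (G w), w⟫ : ℂ) := mul_nonneg (hc0 j) ha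
      have k2 : 0 ≤ c j * (c j * RCLike.re (⟪R j (G w), G w⟫ : ℂ)) :=
        mul_nonneg (hc0 j) (mul_nonneg (hc0 j) hb)
      linarith
    linarith
  -- the telescoping sequence
  set Es : ℕ → H →L[ℂ] H := fun j => match j with
    | 0 => h 0
    | (j+1) => R j - R (j+1)
    with hEsdef
  have hEs_eff : ∀ j, IsEffect (Es j) := by
    intro j
    match j with
    | 0 => exact hheff 0
    | (j+1) =>
      refine ⟨hDpos j, ?_⟩
      have e : (1:H →L[ℂ] H) - (R j - R (j+1)) = h j + R (j+1) := by
        rw [hhdef]; dsimp only; abel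
      show ((1:H →L[ℂ] H) - (R j - R (j+1))).IsPositive
      rw [e]
      exact (hhpos j).add (hRpos (j+1))
  have hps : ∀ N, ∑ j ∈ Finset.range (N+1), Es j = h N := by
    intro N
    induction N with
    | zero => simp [hEsdef]
    | succ n ih =>
      rw [Finset.sum_range_succ, ih]
      show h n + (R n - R (n+1)) = h (n+1)
      rw [hhdef]
      dsimp only
      abel
  have hvEs : ∀ j, v (Es j) = 0 := by
    intro j
    match j with
    | 0 => exact hvh 0
    | (j+1) =>
      have hEq : h j + Es (j+1) = h (j+1) := by
        show h j + (R j - R (j+1)) = h (j+1)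
        rw [hhdef]; dsimp only; abel
      have := gpm_add hv (hheff j) (hEs_eff (j+1)) (by rw [hEq]; exact hheff (j+1))
      rw [hEq, hvh (j+1), hvh j] at this
      linarith
  -- strong convergence of R n to 0
  have hdense : Dense ((LinearMap.range (G : H →ₗ[ℂ] H) : Submodule ℂ H) : Set H) := by
    apply Submodule.dense_iff_topologicalClosure_eq_top.mpr
    apply Submodule.topologicalClosure_eq_top_iff.mpr
    rw [Submodule.eq_bot_iff]
    intro u hu
    have h0 : (⟪G u, u⟫ : ℂ) = 0 :=
      (Submodule.mem_orthogonal _ u).mp hu (G u) (LinearMap.mem_range_self _ u)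
    exact hinj u (pos_apply_eq_zero hG.1 (by rw [h0]; simp))
  have hRGz : ∀ n (z : H), R n (G z) = (c n)⁻¹ • (z - R n z) := by
    intro n z
    have hcpos : (0:ℝ) < c n := by rw [hc]; positivity
    have e0 : R n z + c n • R n (G z) = z := by
      have e1 : R n (A n z) = z := hRAx n z
      rwa [hAx, map_add, map_smul_of_tower] at e1
    have e2 : c n • R n (G z) = z - R n z := by
      rw [eq_sub_iff_add_eq, add_comm]
      exact e0
    rw [← e2, smul_smul, inv_mul_cancel₀ hcpos.ne', one_smul]
  have hRtend : ∀ x : H, Tendsto (fun n => R n x) atTop (nhds 0) := by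
    intro x
    rw [Metric.tendsto_atTop]
    intro ε hε
    obtain ⟨y, hyr, hyd⟩ := hdense.exists_dist_lt x (show (0:ℝ) < ε/4 by linarith)
    obtain ⟨z, hz⟩ := hyr
    rw [dist_eq_norm] at hyd
    obtain ⟨N, hN⟩ := pow_unbounded_of_one_lt (R := ℝ) (4 * ‖z‖ / ε) one_lt_two
    refine ⟨N, fun n hn => ?_⟩
    have hcn : (0:ℝ) < c n := by rw [hc]; positivity
    have hcN : (0:ℝ) < c N := by rw [hc]; positivity
    have hxz : ‖x - G z‖ < ε/4 := by rw [← hz] at hyd; exact hyd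
    have hb1 : ‖R n (x - G z)‖ ≤ ‖x - G z‖ := hRnorm n _
    have hb2 : ‖R n (G z)‖ ≤ (c n)⁻¹ * (2 * ‖z‖) := by
      rw [hRGz n z, norm_smul]
      have e3 : ‖(c n)⁻¹‖ = (c n)⁻¹ := abs_of_pos (by positivity)
      rw [e3]
      have e4 : ‖z - R n z‖ ≤ 2 * ‖z‖ := by
        calc ‖z - R n z‖ ≤ ‖z‖ + ‖R n z‖ := norm_sub_le _ _
        _ ≤ 2 * ‖z‖ := by have := hRnorm n z; linarith
      exact mul_le_mul_of_nonneg_left e4 (by positivity)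
    have hsplit : R n x = R n (x - G z) + R n (G z) := by
      rw [← map_add, sub_add_cancel]
    have hmono : c N ≤ c n := by
      rw [hc]
      exact pow_le_pow_right₀ one_le_two hn
    have hinv : (c n)⁻¹ ≤ (c N)⁻¹ := by
      apply inv_anti₀ hcN hmono
    have hN' : 4 * ‖z‖ < c N * ε := by
      rw [div_lt_iff₀ hε] at hN
      calc 4 * ‖z‖ < 2 ^ N * ε := hN
      _ = c N * ε := by rw [hc]
    have htail : (c n)⁻¹ * (2 * ‖z‖) < ε/2 := by
      have h6 : (c n)⁻¹ * (2 * ‖z‖) ≤ (c N)⁻¹ * (2 * ‖z‖) :=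
        mul_le_mul_of_nonneg_right hinv (by positivity)
      have h7 : (c N)⁻¹ * (2 * ‖z‖) < ε/2 := by
        rw [inv_mul_lt_iff₀ hcN]
        nlinarith
      linarith
    rw [dist_zero_right]
    calc ‖R n x‖ ≤ ‖R n (x - G z)‖ + ‖R n (G z)‖ := by rw [hsplit]; exact norm_add_le _ _
    _ < ε/4 + ε/2 := by
        have : ‖R n (x - G z)‖ < ε / 4 := lt_of_le_of_lt hb1 hxz
        linarith
    _ < ε := by linarith
  -- weak convergence of partial sums to 1
  have hconv : ∀ φ ψ' : H, Tendsto (fun N => (⟪φ, (∑ j ∈ Finset.range N, Es j) ψ'⟫ : ℂ))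
      atTop (nhds (⟪φ, (1 : H →L[ℂ] H) ψ'⟫ : ℂ)) := by
    intro φ ψ'
    have h3 : Tendsto (fun N => h N ψ') atTop (nhds ψ') := by
      have e : (fun N => h N ψ') = fun N => ψ' - R N ψ' := by
        funext N; simp [hhdef]
      rw [e]
      simpa using tendsto_const_nhds.sub (hRtend ψ')
    have h4 : Tendsto (fun N => (⟪φ, h N ψ'⟫ : ℂ)) atTop (nhds (⟪φ, ψ'⟫ : ℂ)) :=
      tendsto_const_nhds.inner h3
    have h5 : Tendsto (fun N => (⟪φ, (∑ j ∈ Finset.range (N+1), Es j) ψ'⟫ : ℂ))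
        atTop (nhds (⟪φ, ψ'⟫ : ℂ)) := by
      apply h4.congr
      intro N
      rw [hps N]
    have h6 : Tendsto (fun N => (⟪φ, (∑ j ∈ Finset.range N, Es j) ψ'⟫ : ℂ))
        atTop (nhds (⟪φ, ψ'⟫ : ℂ)) := by
      rw [← tendsto_add_atTop_iff_nat 1]
      exact h5
    simpa using h6
  have hsigma := hv.2.2 Es 1 hEs_eff isEffect_one hconv
  have hfun : (fun j => v (Es j)) = fun _ => (0:ℝ) := funext hvEs
  rw [hfun] at hsigma
  have h01 := hasSum_zero.unique hsigma
  rw [hv.2.1] at h01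
  norm_num at h01

end QT

open QT in
/-- On a separable complex Hilbert space, every propensity function on the set
of quantum effects is given by the Born rule for some unit vector `ψ`. -/
theorem stmt_11 (H : Type) [NormedAddCommGroup H] [InnerProductSpace ℂ H] [CompleteSpace H]
    [TopologicalSpace.SeparableSpace H]
    (v : (H →L[ℂ] H) → ℝ) (hv : IsPropensityEff v) :
    ∃ ψ : H, ‖ψ‖ = 1 ∧ ∀ E, IsEffect E → (v E : ℂ) = ⟪ψ, E ψ⟫ := by
  classical
  obtain ⟨hGPM, hProp⟩ := hv
  -- the null effects and the union of their ranges
  set NN : Set (H →L[ℂ] H) := {F | IsEffect F ∧ v F = 0} with hNN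
  set T : Set H := {y | ∃ F ∈ NN, ∃ x : H, F x = y} with hT
  have hT0 : (0:H) ∈ T := ⟨0, ⟨isEffect_zero, gpm_zero hGPM⟩, 0, by simp⟩
  -- countable dense family in T
  have hsep : TopologicalSpace.IsSeparable T :=
    (TopologicalSpace.isSeparable_univ_iff.mpr ‹_›).mono (Set.subset_univ T)
  obtain ⟨cset, hc_sub, hc_count, hc_dense⟩ := hsep.exists_countable_dense_subset
  set cset' : Set H := insert 0 cset with hcset'
  have hc'_count : cset'.Countable := hc_count.insert 0
  have hc'_sub : cset' ⊆ T := by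
    intro y hy
    rcases hy with rfl | hy
    · exact hT0
    · exact hc_sub hy
  have hc'_ne : cset'.Nonempty := ⟨0, Set.mem_insert 0 cset⟩
  obtain ⟨u, hu⟩ := hc'_count.exists_eq_range hc'_ne
  have hu_mem : ∀ k, u k ∈ T := fun k => hc'_sub (hu ▸ Set.mem_range_self k)
  choose Fk hFkN xk hxk using hu_mem
  have hFkEff : ∀ k, IsEffect (Fk k) := fun k => (hFkN k).1
  have hFkv : ∀ k, v (Fk k) = 0 := fun k => (hFkN k).2
  -- the master null effect G
  set a : ℕ → ℝ := fun m => (2:ℝ)⁻¹ ^ (m+1) with ha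
  have ha_pos : ∀ m, 0 < a m := fun m => by positivity
  have ha_le : ∀ m, a m ≤ 1 := fun m => pow_le_one₀ (by norm_num) (by norm_num)
  set Es : ℕ → H →L[ℂ] H := fun m => a m • Fk m with hEs
  have hEsEff : ∀ m, IsEffect (Es m) := fun m =>
    isEffect_smul (ha_pos m).le (ha_le m) (hFkEff m)
  have hsummable : Summable Es := by
    apply Summable.of_norm
    apply Summable.of_nonneg_of_le (fun m => norm_nonneg _) (fun m => ?_)
      (summable_geometric_two.mul_left (2:ℝ)⁻¹)
    calc ‖Es m‖ = ‖a m • Fk m‖ := rfl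
    _ = ‖a m‖ * ‖Fk m‖ := norm_smul _ _
    _ ≤ a m * 1 := by
        rw [Real.norm_eq_abs, abs_of_pos (ha_pos m)]
        exact mul_le_mul_of_nonneg_left (norm_effect_le_one (hFkEff m)) (ha_pos m).le
    _ = (2:ℝ)⁻¹ * ((1:ℝ)/2) ^ m := by
        rw [mul_one, show a m = (2:ℝ)⁻¹ ^ (m+1) from rfl, pow_succ]
        ring
  set G : H →L[ℂ] H := ∑' m, Es m with hG
  have hGsum : HasSum Es G := hsummable.hasSum
  -- inner products of partial objects
  have hInner : ∀ φ x : H, HasSum (fun m => (⟪φ, Es m x⟫ : ℂ)) (⟪φ, G x⟫ : ℂ) := by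
    intro φ x
    have L : (H →L[ℂ] H) →L[ℂ] ℂ := (innerSL ℂ φ).comp (ContinuousLinearMap.apply ℂ H x)
    exact hGsum.mapL ((innerSL ℂ φ).comp (ContinuousLinearMap.apply ℂ H x))
  have hInnerRe : ∀ φ x : H, HasSum (fun m => RCLike.re (⟪φ, Es m x⟫ : ℂ))
      (RCLike.re (⟪φ, G x⟫ : ℂ)) := fun φ x => Complex.hasSum_re (hInner φ x)
  -- G is an effect
  have hGsa : IsSelfAdjoint G := by
    rw [hG, IsSelfAdjoint, tsum_star]
    congr 1
    funext m
    show star (a m • Fk m) = a m • Fk m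
    rw [star_smul, star_trivial, ((hFkEff m).1.isSelfAdjoint).star_eq]
  have hGx_le : ∀ x : H, RCLike.re (⟪x, G x⟫ : ℂ) ≤ ‖x‖ ^ 2 := by
    intro x
    have hg : HasSum (fun m : ℕ => ‖x‖^2 / 2 / 2 ^ m) (‖x‖^2) := hasSum_geometric_two' _
    refine hasSum_le (fun m => ?_) (hInnerRe x x) hg
    have h1 : RCLike.re (⟪x, Fk m x⟫ : ℂ) ≤ ‖x‖ ^ 2 := by
      have h2 := (hFkEff m).2.re_inner_nonneg_right x
      rw [ContinuousLinearMap.sub_apply, inner_sub_right, map_sub] at h2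
      have h3 : RCLike.re (⟪x, (1 : H →L[ℂ] H) x⟫ : ℂ) = ‖x‖ ^ 2 := by
        rw [ContinuousLinearMap.one_apply, ← @inner_self_eq_norm_sq ℂ]
      linarith
    have e : RCLike.re (⟪x, Es m x⟫ : ℂ) = a m * RCLike.re (⟪x, Fk m x⟫ : ℂ) := by
      show RCLike.re (⟪x, (a m • Fk m) x⟫ : ℂ) = _
      rw [ContinuousLinearMap.smul_apply, re_inner_smul_right]
    rw [e]
    calc a m * RCLike.re (⟪x, Fk m x⟫ : ℂ) ≤ a m * ‖x‖^2 :=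
      mul_le_mul_of_nonneg_left h1 (ha_pos m).le
    _ = ‖x‖^2 / 2 / 2^m := by
        rw [show a m = (2:ℝ)⁻¹ ^ (m+1) from rfl, pow_succ, inv_pow]; ring
  have hGx_nonneg : ∀ x : H, 0 ≤ RCLike.re (⟪x, G x⟫ : ℂ) := by
    intro x
    refine hasSum_le (fun m => ?_) hasSum_zero (hInnerRe x x)
    have e : RCLike.re (⟪x, Es m x⟫ : ℂ) = a m * RCLike.re (⟪x, Fk m x⟫ : ℂ) := by
      show RCLike.re (⟪x, (a m • Fk m) x⟫ : ℂ) = _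
      rw [ContinuousLinearMap.smul_apply, re_inner_smul_right]
    rw [e]
    exact mul_nonneg (ha_pos m).le ((hFkEff m).1.re_inner_nonneg_right x)
  have hGEff : IsEffect G := by
    constructor
    · refine isPositive_def'.mpr ⟨hGsa, fun x => ?_⟩
      rw [reApplyInnerSelf, inner_re_symm]
      exact hGx_nonneg x
    · have hsa1 : IsSelfAdjoint ((1:H →L[ℂ] H) - G) := (IsSelfAdjoint.one _).sub hGsa
      refine isPositive_def'.mpr ⟨hsa1, fun x => ?_⟩
      rw [reApplyInnerSelf, inner_re_symm, ContinuousLinearMap.sub_apply, inner_sub_right,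
        map_sub, ContinuousLinearMap.one_apply]
      have h3 : RCLike.re (⟪x, x⟫ : ℂ) = ‖x‖ ^ 2 := by rw [← @inner_self_eq_norm_sq ℂ]
      have := hGx_le x
      linarith
  -- v G = 0
  have hvEs : ∀ m, v (Es m) = 0 := by
    intro m
    have hle : v (Es m) ≤ v (Fk m) := by
      apply gpm_mono hGPM (hEsEff m) (hFkEff m)
      have e : Fk m - Es m = (1 - a m) • Fk m := by
        show Fk m - a m • Fk m = _
        rw [sub_smul, one_smul]
      rw [e]
      exact isPositive_smul (by linarith [ha_le m]) (hFkEff m).1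
    have := gpm_nonneg hGPM (hEsEff m)
    have := hFkv m
    linarith
  have hvG : v G = 0 := by
    have hconv : ∀ φ ψ' : H, Tendsto (fun N => (⟪φ, (∑ j ∈ Finset.range N, Es j) ψ'⟫ : ℂ))
        atTop (nhds (⟪φ, G ψ'⟫ : ℂ)) := by
      intro φ ψ'
      have h1 : Tendsto (fun N => ∑ j ∈ Finset.range N, Es j) atTop (nhds G) :=
        hGsum.tendsto_sum_nat
      have h2 : Tendsto (fun N => ((∑ j ∈ Finset.range N, Es j) : H →L[ℂ] H) ψ') atTop
          (nhds (G ψ')) := by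
        have : Continuous (fun (Tm : H →L[ℂ] H) => Tm ψ') :=
          (ContinuousLinearMap.apply ℂ H ψ').continuous
        exact (this.tendsto G).comp h1
      exact tendsto_const_nhds.inner h2
    have hsigma := hGPM.2.2 Es G hEsEff hGEff hconv
    have hfun : (fun j => v (Es j)) = fun _ => (0:ℝ) := funext hvEs
    rw [hfun] at hsigma
    exact (hasSum_zero.unique hsigma).symm
  -- the vector ψ
  obtain ⟨x0, hx0ne, hx0⟩ := exists_ker_ne_zero hGPM hGEff hvG
  set ψ : H := (‖x0‖⁻¹ : ℝ) • x0 with hψdef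
  have hψnorm : ‖ψ‖ = 1 := by
    rw [hψdef, norm_smul, Real.norm_eq_abs, abs_inv, abs_of_nonneg (norm_nonneg _),
      inv_mul_cancel₀ (norm_ne_zero_iff.mpr hx0ne)]
  have hGψ : G ψ = 0 := by
    rw [hψdef, map_smul_of_tower, hx0, smul_zero]
  have hψself : RCLike.re (⟪ψ, ψ⟫ : ℂ) = 1 := by
    rw [@inner_self_eq_norm_sq ℂ, hψnorm, one_pow]
  -- every Fk kills ψ
  have hFk0 : ∀ m, Fk m ψ = 0 := by
    intro m
    have hsum0 : HasSum (fun m => RCLike.re (⟪ψ, Es m ψ⟫ : ℂ)) 0 := by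
      have := hInnerRe ψ ψ
      rw [hGψ, inner_zero_right, map_zero] at this
      exact this
    have hnn : ∀ j, 0 ≤ RCLike.re (⟪ψ, Es j ψ⟫ : ℂ) :=
      fun j => (hEsEff j).1.re_inner_nonneg_right ψ
    have hle0 : RCLike.re (⟪ψ, Es m ψ⟫ : ℂ) ≤ 0 := by
      have := le_hasSum hsum0 m (fun j _ => hnn j)
      linarith [this]
    have heq0 : RCLike.re (⟪ψ, Es m ψ⟫ : ℂ) = 0 := le_antisymm hle0 (hnn m)
    have e : RCLike.re (⟪ψ, Es m ψ⟫ : ℂ) = a m * RCLike.re (⟪ψ, Fk m ψ⟫ : ℂ) := by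
      show RCLike.re (⟪ψ, (a m • Fk m) ψ⟫ : ℂ) = _
      rw [ContinuousLinearMap.smul_apply, re_inner_smul_right]
    rw [e] at heq0
    have h0 : RCLike.re (⟪ψ, Fk m ψ⟫ : ℂ) = 0 := by
      rcases mul_eq_zero.mp heq0 with h | h
      · exact absurd h (ha_pos m).ne'
      · exact h
    apply pos_apply_eq_zero (hFkEff m).1
    rw [inner_re_symm]
    exact h0
  -- ψ is null for every null effect
  have hNull : ∀ F, F ∈ NN → (⟪ψ, F ψ⟫ : ℂ) = 0 := by
    intro F hF
    have hmem : F ψ ∈ T := ⟨F, hF, ψ, rfl⟩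
    have hcl : F ψ ∈ closure (Set.range u) := by
      rw [← hu]
      exact closure_mono (Set.subset_insert 0 cset) (hc_dense hmem)
    have hkey : ∀ ε : ℝ, 0 < ε → ‖(⟪ψ, F ψ⟫ : ℂ)‖ < ε := by
      intro ε hε
      obtain ⟨y, hyu, hyd⟩ := Metric.mem_closure_iff.mp hcl ε hε
      obtain ⟨k, rfl⟩ := hyu
      have hzero : (⟪ψ, u k⟫ : ℂ) = 0 := by
        rw [← hxk k, ← sa_inner_move (hFkEff k).1.isSelfAdjoint ψ (xk k), hFk0 k, inner_zero_left]
      have e : (⟪ψ, F ψ⟫ : ℂ) = ⟪ψ, F ψ - u k⟫ := by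
        rw [inner_sub_right, hzero, sub_zero]
      rw [e]
      calc ‖(⟪ψ, F ψ - u k⟫ : ℂ)‖ ≤ ‖ψ‖ * ‖F ψ - u k‖ := norm_inner_le_norm _ _
      _ = ‖F ψ - u k‖ := by rw [hψnorm, one_mul]
      _ < ε := by rwa [← dist_eq_norm]
    have hle : ‖(⟪ψ, F ψ⟫ : ℂ)‖ ≤ 0 := by
      by_contra hlt
      push_neg at hlt
      exact lt_irrefl _ (hkey _ hlt)
    exact norm_le_zero_iff.mp hle
  -- the Born functional
  set w : (H →L[ℂ] H) → ℝ := fun E => RCLike.re (⟪ψ, E ψ⟫ : ℂ) with hwdef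
  have hwmem : ∀ E, IsEffect E → w E ∈ Set.Icc (0:ℝ) 1 := by
    intro E hE
    constructor
    · exact hE.1.re_inner_nonneg_right ψ
    · have h2 := hE.2.re_inner_nonneg_right ψ
      rw [ContinuousLinearMap.sub_apply, inner_sub_right, map_sub,
        ContinuousLinearMap.one_apply] at h2
      show RCLike.re (⟪ψ, E ψ⟫ : ℂ) ≤ 1
      linarith [hψself]
  have hwGPM : IsGPMEff w := by
    refine ⟨hwmem, ?_, ?_⟩
    · show RCLike.re (⟪ψ, (1:H →L[ℂ] H) ψ⟫ : ℂ) = 1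
      rw [ContinuousLinearMap.one_apply]
      exact hψself
    · intro Es' E' hEs' hE' hconv
      have hnn : ∀ j, 0 ≤ w (Es' j) := fun j => (hwmem _ (hEs' j)).1
      rw [hasSum_iff_tendsto_nat_of_nonneg hnn]
      have h1 : Tendsto (fun N => RCLike.re (⟪ψ, (∑ j ∈ Finset.range N, Es' j) ψ⟫:ℂ))
          atTop (nhds (RCLike.re (⟪ψ, E' ψ⟫:ℂ))) :=
        (RCLike.continuous_re.tendsto _).comp (hconv ψ ψ)
      apply h1.congr
      intro N
      rw [ContinuousLinearMap.sum_apply, inner_sum, map_sum]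
  set v' : (H →L[ℂ] H) → ℝ := fun E => (v E + w E)/2 with hv'def
  have hv'GPM : IsGPMEff v' := by
    refine ⟨?_, ?_, ?_⟩
    · intro E hE
      obtain ⟨ha1, ha2⟩ := hGPM.1 E hE
      obtain ⟨hb1, hb2⟩ := hwmem E hE
      constructor
      · show 0 ≤ (v E + w E)/2
        linarith
      · show (v E + w E)/2 ≤ 1
        linarith
    · show (v 1 + w 1)/2 = 1
      rw [hGPM.2.1, hwGPM.2.1]
      norm_num
    · intro Es' E' hEs' hE' hconv
      have h1 := hGPM.2.2 Es' E' hEs' hE' hconv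
      have h2 := hwGPM.2.2 Es' E' hEs' hE' hconv
      exact (h1.add h2).div_const 2
  have hsets : {E | IsEffect E ∧ v' E = 1} = {E | IsEffect E ∧ v E = 1} := by
    ext E
    simp only [Set.mem_setOf_eq]
    constructor
    · rintro ⟨hE, h1⟩
      refine ⟨hE, ?_⟩
      obtain ⟨ha1, ha2⟩ := hGPM.1 E hE
      obtain ⟨hb1, hb2⟩ := hwmem E hE
      have he : (v E + w E)/2 = 1 := h1
      linarith
    · rintro ⟨hE, h1⟩
      refine ⟨hE, ?_⟩
      have hmE : IsEffect (1 - E) := ⟨hE.2, by rw [sub_sub_cancel]; exact hE.1⟩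
      have hadd : v (E + (1 - E)) = v E + v (1 - E) :=
        gpm_add hGPM hE hmE (by rw [add_sub_cancel]; exact isEffect_one)
      rw [add_sub_cancel] at hadd
      have hv0 : v (1 - E) = 0 := by
        rw [hGPM.2.1] at hadd
        linarith
      have hnl := hNull (1 - E) ⟨hmE, hv0⟩
      rw [ContinuousLinearMap.sub_apply, inner_sub_right, ContinuousLinearMap.one_apply,
        sub_eq_zero] at hnl
      have hwE : w E = 1 := by
        show RCLike.re (⟪ψ, E ψ⟫ : ℂ) = 1
        rw [← hnl]
        exact hψself
      show (v E + w E)/2 = 1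
      rw [h1, hwE]
      norm_num
  have hfinal := hProp v' hv'GPM hsets
  refine ⟨ψ, hψnorm, ?_⟩
  intro E hE
  have h1 : (v E + w E)/2 = v E := hfinal E hE
  have hwE : w E = v E := by linarith
  have him : (⟪ψ, E ψ⟫ : ℂ).im = 0 := by
    rw [← Complex.conj_eq_iff_im]
    have e1 : (starRingEnd ℂ) (⟪ψ, E ψ⟫ : ℂ) = ⟪E ψ, ψ⟫ := by
      rw [inner_conj_symm]
    rw [e1]
    exact sa_inner_move hE.1.isSelfAdjoint ψ ψ
  apply Complex.ext
  · rw [Complex.ofReal_re, ← hwE]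
    rfl
  · rw [Complex.ofReal_im, him]
end

section
/- There are no propensity functions on P(ℂ²): for every Gisin measure v on P(ℂ²) there exists a Gisin measure w on P(ℂ²) with w ≠ v and A_w = A_v. -/
open scoped ComplexInnerProductSpace

namespace QT2

/-- The two-dimensional complex Hilbert space `ℂ²`. -/
abbrev H2 : Type := EuclideanSpace ℂ (Fin 2)

/-- Bounded operators on `ℂ²`. -/
abbrev Op : Type := H2 →L[ℂ] H2

/-- An orthogonal projection on `ℂ²`: a self-adjoint idempotent operator. -/
def IsOrthProj (P : Op) : Prop := IsSelfAdjoint P ∧ P ∘L P = P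

/-- The orthogonal projection onto a subspace of `ℂ²`, as an operator. -/
noncomputable def projOnto (K : Submodule ℂ H2) : Op :=
  K.subtypeL ∘L K.orthogonalProjectionOnto

/-- A generalized probability measure on `P(ℂ²)`: a `[0,1]`-valued assignment with
`v(I) = 1` that is additive on finite sequences of pairwise orthogonal projections whose
sum is a projection. -/
def IsGPM2 (v : Op → ℝ) : Prop :=
  (∀ P, IsOrthProj P → v P ∈ Set.Icc (0 : ℝ) 1) ∧
  v 1 = 1 ∧
  ∀ (n : ℕ) (Ps : Fin n → Op),
    (∀ j, IsOrthProj (Ps j)) →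
    (Pairwise fun i j => Ps i ∘L Ps j = 0) →
    IsOrthProj (∑ j, Ps j) →
    v (∑ j, Ps j) = ∑ j, v (Ps j)

/-- A Gisin measure on `P(ℂ²)`: a generalized probability measure such that, whenever every
member of a set `K` of projections is assigned probability one, so is the projection onto the
intersection of the ranges of the members of `K`. -/
def IsGisin (v : Op → ℝ) : Prop :=
  IsGPM2 v ∧
  ∀ K : Set Op, (∀ P ∈ K, IsOrthProj P) → (∀ P ∈ K, v P = 1) →
    v (projOnto (⨅ P ∈ K, LinearMap.range (P : H2 →ₗ[ℂ] H2))) = 1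

lemma symm_of {P : Op} (hP : IsSelfAdjoint P) (x y : H2) : ⟪P x, y⟫ = ⟪x, P y⟫ :=
  (ContinuousLinearMap.isSelfAdjoint_iff_isSymmetric.mp hP) x y

lemma exists_fixed {P : Op} (hP : P ∘L P = P) (h0 : P ≠ 0) : ∃ x : H2, x ≠ 0 ∧ P x = x := by
  obtain ⟨z, hz⟩ : ∃ z, P z ≠ 0 := by
    by_contra h; push_neg at h; exact h0 (ContinuousLinearMap.ext fun z => by simp [h z])
  refine ⟨P z, hz, ?_⟩
  have := ContinuousLinearMap.ext_iff.mp hP z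
  simpa using this

lemma span_top {x y : H2} (hx : x ≠ 0) (hy : y ≠ 0) (hxy : ⟪x, y⟫ = 0) :
    Submodule.span ℂ ({x, y} : Set H2) = ⊤ := by
  have hyx : ⟪y, x⟫ = 0 := by rw [← inner_conj_symm, hxy]; simp
  have hli : LinearIndependent ℂ ![x, y] := by
    rw [LinearIndependent.pair_iff]
    intro s t hst
    constructor
    · have h1 : ⟪x, s • x + t • y⟫ = 0 := by rw [hst]; simp
      rw [inner_add_right, inner_smul_right, inner_smul_right, hxy, mul_zero, add_zero] at h1
      rcases mul_eq_zero.mp h1 with h | h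
      · exact h
      · exact absurd (inner_self_eq_zero.mp h) hx
    · have h1 : ⟪y, s • x + t • y⟫ = 0 := by rw [hst]; simp
      rw [inner_add_right, inner_smul_right, inner_smul_right, hyx, mul_zero, zero_add] at h1
      rcases mul_eq_zero.mp h1 with h | h
      · exact h
      · exact absurd (inner_self_eq_zero.mp h) hy
  have := hli.span_eq_top_of_card_eq_finrank (by simp [finrank_euclideanSpace_fin])
  rw [show Set.range ![x, y] = ({x, y} : Set H2) by simp [Matrix.range_cons]; exact Set.pair_comm y x] at this
  exact this

lemma ext_of_pair {x y : H2} (hspan : Submodule.span ℂ ({x, y} : Set H2) = ⊤)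
    {T : Op} (h1 : T x = 0) (h2 : T y = 0) : T = 0 := by
  ext z
  have hz : z ∈ Submodule.span ℂ ({x, y} : Set H2) := by rw [hspan]; trivial
  obtain ⟨a, b, rfl⟩ := Submodule.mem_span_pair.mp hz
  simp [h1, h2]

lemma two_decomp {P Q : Op} (hP : IsOrthProj P) (hQ : IsOrthProj Q)
    (hPQ : P ∘L Q = 0) (hQP : Q ∘L P = 0) (hP0 : P ≠ 0) (hQ0 : Q ≠ 0) :
    P + Q = 1 ∧ ∀ R : Op, R ∘L P = 0 → R ∘L Q = 0 → R = 0 := by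
  obtain ⟨x, hx0, hx⟩ := exists_fixed hP.2 hP0
  obtain ⟨y, hy0, hy⟩ := exists_fixed hQ.2 hQ0
  have hxy : ⟪x, y⟫ = 0 := by
    have : ⟪x, y⟫ = ⟪P x, Q y⟫ := by rw [hx, hy]
    rw [this, symm_of hP.1]
    have : P (Q y) = (P ∘L Q) y := rfl
    rw [this, hPQ]
    simp
  have hspan := span_top hx0 hy0 hxy
  have hQx : Q x = 0 := by
    have : Q x = (Q ∘L P) x := by rw [ContinuousLinearMap.comp_apply, hx]
    rw [this, hQP]; rfl
  have hPy : P y = 0 := by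
    have : P y = (P ∘L Q) y := by rw [ContinuousLinearMap.comp_apply, hy]
    rw [this, hPQ]; rfl
  constructor
  · have h := ext_of_pair hspan (T := P + Q - 1) ?_ ?_
    · exact sub_eq_zero.mp h
    · simp [hx, hQx]
    · simp [hy, hPy]
  · intro R hRP hRQ
    refine ext_of_pair hspan ?_ ?_
    · have : R x = (R ∘L P) x := by rw [ContinuousLinearMap.comp_apply, hx]
      rw [this, hRP]; rfl
    · have : R y = (R ∘L Q) y := by rw [ContinuousLinearMap.comp_apply, hy]
      rw [this, hRQ]; rfl

lemma orthProj_one : IsOrthProj (1 : Op) := ⟨IsSelfAdjoint.one Op, by ext z; simp⟩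

lemma orthProj_zero : IsOrthProj (0 : Op) := ⟨by rw [ContinuousLinearMap.isSelfAdjoint_iff_isSymmetric]; intro x y; simp, by ext z; simp⟩

lemma comp_compl {P : Op} (hP : P ∘L P = P) : P ∘L (1 - P) = 0 ∧ (1 - P) ∘L P = 0 := by
  have hz : ∀ z, P (P z) = P z := fun z => ContinuousLinearMap.ext_iff.mp hP z
  constructor <;> ext z <;> simp [map_sub, hz]

lemma orthProj_compl {P : Op} (hP : IsOrthProj P) : IsOrthProj (1 - P) := by
  constructor
  · rw [ContinuousLinearMap.isSelfAdjoint_iff_isSymmetric]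
    intro x y
    have e : ∀ z : H2, ((1 : Op) - P) z = z - P z := fun z => rfl
    show ⟪((1 : Op) - P) x, y⟫ = ⟪x, ((1 : Op) - P) y⟫
    rw [e, e, inner_sub_left, inner_sub_right, symm_of hP.1 x y]
  · have hz : ∀ z, P (P z) = P z := fun z => ContinuousLinearMap.ext_iff.mp hP.2 z
    ext z; simp [map_sub, hz]

lemma gpm_zero {v : Op → ℝ} (hv : IsGPM2 v) : v 0 = 0 := by
  have hs : (∑ _j : Fin 2, (0 : Op)) = 0 := Finset.sum_const_zero
  have h := hv.2.2 2 (fun _ => 0) (fun _ => orthProj_zero)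
    (fun i j _ => by simp) (by rw [hs]; exact orthProj_zero)
  rw [hs, Fin.sum_univ_two] at h
  linarith

lemma gpm_pair {v : Op → ℝ} (hv : IsGPM2 v) {P Q : Op} (hP : IsOrthProj P) (hQ : IsOrthProj Q)
    (hPQ : P ∘L Q = 0) (hQP : Q ∘L P = 0) (hsum : P + Q = 1) : v P + v Q = 1 := by
  have h := hv.2.2 2 ![P, Q] (fun j => by fin_cases j <;> assumption)
    (by
      intro i j hij
      fin_cases i <;> fin_cases j <;> simp_all)
    (by rw [Fin.sum_univ_two]; simp only [Matrix.cons_val_zero, Matrix.cons_val_one,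
        Matrix.head_cons]; rw [hsum]; exact orthProj_one)
  rw [Fin.sum_univ_two, Fin.sum_univ_two] at h
  simp only [Matrix.cons_val_zero, Matrix.cons_val_one, Matrix.head_cons] at h
  rw [hsum, hv.2.1] at h
  linarith

lemma projOnto_apply (K : Submodule ℂ H2) (z : H2) :
    projOnto K z = (K.orthogonalProjectionOnto z : H2) := rfl

lemma projOnto_isOrthProj (K : Submodule ℂ H2) : IsOrthProj (projOnto K) := by
  refine ⟨isSelfAdjoint_starProjection K, ?_⟩
  refine ContinuousLinearMap.ext fun z => ?_
  show (K.orthogonalProjectionOnto ((K.orthogonalProjectionOnto z : H2)) : H2)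
      = (K.orthogonalProjectionOnto z : H2)
  exact congrArg _ (K.orthogonalProjectionOnto_mem_subspace_eq_self
    ⟨_, (K.orthogonalProjectionOnto z).2⟩)

lemma projOnto_bot : projOnto (⊥ : Submodule ℂ H2) = 0 := by
  refine ContinuousLinearMap.ext fun z => ?_
  rw [projOnto_apply, Submodule.orthogonalProjectionOnto_bot]
  rfl

noncomputable def lineProj (u : H2) : Op := projOnto (ℂ ∙ u)

lemma lineProj_apply (u z : H2) :
    lineProj u z = (⟪u, z⟫ / ((‖u‖ ^ 2 : ℝ) : ℂ)) • u := by
  rw [lineProj, projOnto_apply]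
  exact Submodule.starProjection_singleton (𝕜 := ℂ) z

lemma lineProj_self {u : H2} (hu : u ≠ 0) : lineProj u u = u := by
  rw [lineProj_apply, inner_self_eq_norm_sq_to_K]
  have hn : (‖u‖ : ℂ) ≠ 0 := by exact_mod_cast norm_ne_zero_iff.mpr hu
  field_simp
  convert one_smul ℂ u
  push_cast
  exact div_self (pow_ne_zero 2 hn)

lemma lineProj_ne_zero {u : H2} (hu : u ≠ 0) : lineProj u ≠ 0 := by
  intro h
  apply hu
  rw [← lineProj_self hu, h]
  rfl

lemma lineProj_orth {u w : H2} (huw : ⟪u, w⟫ = 0) : lineProj u ∘L lineProj w = 0 := by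
  refine ContinuousLinearMap.ext fun z => ?_
  rw [ContinuousLinearMap.comp_apply, lineProj_apply w z, map_smul, lineProj_apply u w, huw]
  simp

lemma range_lineProj {u : H2} (hu : u ≠ 0) :
    LinearMap.range (lineProj u : H2 →ₗ[ℂ] H2) = (ℂ ∙ u) := by
  apply le_antisymm
  · rintro x ⟨z, rfl⟩
    rw [Submodule.mem_span_singleton]
    exact ⟨⟪u, z⟫ / ((‖u‖ ^ 2 : ℝ) : ℂ), (lineProj_apply u z).symm⟩
  · intro x hx
    obtain ⟨c, rfl⟩ := Submodule.mem_span_singleton.mp hx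
    exact ⟨c • u, by rw [map_smul]; show c • lineProj u u = c • u; rw [lineProj_self hu]⟩

lemma no_both_one {v : Op → ℝ} (hv : IsGisin v) {u w : H2} (hu : u ≠ 0) (hw : w ≠ 0)
    (hind : ∀ a : ℂ, a • u ≠ w) (h1 : v (lineProj u) = 1) (h2 : v (lineProj w) = 1) : False := by
  have hrange : (⨅ P ∈ ({lineProj u, lineProj w} : Set Op), LinearMap.range (P : H2 →ₗ[ℂ] H2)) = ⊥ := by
    rw [iInf_pair]
    rw [range_lineProj hu, range_lineProj hw]
    rw [Submodule.eq_bot_iff]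
    rintro z ⟨hz1, hz2⟩
    obtain ⟨a, rfl⟩ := Submodule.mem_span_singleton.mp hz1
    obtain ⟨b, hb⟩ := Submodule.mem_span_singleton.mp hz2
    by_contra hz
    have hbne : b ≠ 0 := by rintro rfl; rw [zero_smul] at hb; exact hz hb.symm
    exact hind (b⁻¹ * a) (by rw [mul_smul, ← hb, inv_smul_smul₀ hbne])
  have := hv.2 ({lineProj u, lineProj w} : Set Op)
    (by rintro P (rfl | rfl) <;> exact projOnto_isOrthProj _)
    (by rintro P (rfl | rfl) <;> assumption)
  rw [hrange, projOnto_bot, gpm_zero hv.1] at this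
  norm_num at this

lemma exists_mid {v : Op → ℝ} (hv : IsGisin v) : ∃ P, IsOrthProj P ∧ 0 < v P ∧ v P < 1 := by
  by_contra hno
  push_neg at hno
  have hdich : ∀ P, IsOrthProj P → v P = 0 ∨ v P = 1 := by
    intro P hP
    obtain ⟨h0, h1⟩ := hv.1.1 P hP
    rcases lt_or_eq_of_le h0 with h | h
    · right; exact le_antisymm h1 (hno P hP h)
    · left; exact h.symm
  set e0 : H2 := EuclideanSpace.single 0 1 with he0
  set e1 : H2 := EuclideanSpace.single 1 1 with he1
  have h0ne : e0 ≠ 0 := by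
    intro h
    have := congrArg (fun x : H2 => x 0) h
    simp [he0, EuclideanSpace.single_apply] at this
  have h1ne : e1 ≠ 0 := by
    intro h
    have := congrArg (fun x : H2 => x 1) h
    simp [he1, EuclideanSpace.single_apply] at this
  have hpne : e0 + e1 ≠ 0 := by
    intro h
    have := congrArg (fun x : H2 => x 0) h
    simp [he0, he1, EuclideanSpace.single_apply] at this
  have hmne : e0 - e1 ≠ 0 := by
    intro h
    have := congrArg (fun x : H2 => x 0) h
    simp [he0, he1, EuclideanSpace.single_apply] at this
  have h01 : ⟪e0, e1⟫ = 0 := by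
    simp [he0, he1, EuclideanSpace.inner_single_left, EuclideanSpace.single_apply]
  have h10 : ⟪e1, e0⟫ = 0 := by
    simp [he0, he1, EuclideanSpace.inner_single_left, EuclideanSpace.single_apply]
  have h00 : ⟪e0, e0⟫ = 1 := by
    simp [he0, EuclideanSpace.inner_single_left, EuclideanSpace.single_apply]
  have h11 : ⟪e1, e1⟫ = 1 := by
    simp [he1, EuclideanSpace.inner_single_left, EuclideanSpace.single_apply]
  have hpm : ⟪e0 + e1, e0 - e1⟫ = 0 := by
    rw [inner_add_left, inner_sub_right, inner_sub_right, h00, h01, h10, h11]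
    ring
  have hmp : ⟪e0 - e1, e0 + e1⟫ = 0 := by
    rw [inner_sub_left, inner_add_right, inner_add_right, h00, h01, h10, h11]
    ring
  -- the four independence facts
  have hind1 : ∀ a : ℂ, a • e0 ≠ e0 + e1 := by
    intro a h
    have := congrArg (fun x : H2 => x 1) h
    simp [he0, he1, EuclideanSpace.single_apply] at this
  have hind2 : ∀ a : ℂ, a • e0 ≠ e0 - e1 := by
    intro a h
    have := congrArg (fun x : H2 => x 1) h
    simp [he0, he1, EuclideanSpace.single_apply] at this
  have hind3 : ∀ a : ℂ, a • e1 ≠ e0 + e1 := by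
    intro a h
    have := congrArg (fun x : H2 => x 0) h
    simp [he0, he1, EuclideanSpace.single_apply] at this
  have hind4 : ∀ a : ℂ, a • e1 ≠ e0 - e1 := by
    intro a h
    have := congrArg (fun x : H2 => x 0) h
    simp [he0, he1, EuclideanSpace.single_apply] at this
  have hA := two_decomp (projOnto_isOrthProj _) (projOnto_isOrthProj _)
    (lineProj_orth h01) (lineProj_orth h10) (lineProj_ne_zero h0ne) (lineProj_ne_zero h1ne)
  have hB := two_decomp (projOnto_isOrthProj _) (projOnto_isOrthProj _)
    (lineProj_orth hpm) (lineProj_orth hmp) (lineProj_ne_zero hpne) (lineProj_ne_zero hmne)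
  have hvA := gpm_pair hv.1 (projOnto_isOrthProj _) (projOnto_isOrthProj _)
    (lineProj_orth h01) (lineProj_orth h10) hA.1
  have hvB := gpm_pair hv.1 (projOnto_isOrthProj _) (projOnto_isOrthProj _)
    (lineProj_orth hpm) (lineProj_orth hmp) hB.1
  have hvA' : v (lineProj e0) + v (lineProj e1) = 1 := hvA
  have hvB' : v (lineProj (e0 + e1)) + v (lineProj (e0 - e1)) = 1 := hvB
  have hA1 : v (lineProj e0) = 1 ∨ v (lineProj e1) = 1 := by
    rcases hdich (lineProj e0) (projOnto_isOrthProj _) with h | h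
    · right; linarith
    · left; exact h
  have hB1 : v (lineProj (e0 + e1)) = 1 ∨ v (lineProj (e0 - e1)) = 1 := by
    rcases hdich (lineProj (e0 + e1)) (projOnto_isOrthProj _) with h | h
    · right; linarith
    · left; exact h
  rcases hA1 with h | h <;> rcases hB1 with h' | h'
  · exact no_both_one hv h0ne hpne hind1 h h'
  · exact no_both_one hv h0ne hmne hind2 h h'
  · exact no_both_one hv h1ne hpne hind3 h h'
  · exact no_both_one hv h1ne hmne hind4 h h'

end QT2

open QT2 in
/-- There are no propensity functions on `P(ℂ²)`: every Gisin measure `v` on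
`P(ℂ²)` admits a different Gisin measure `w` with the same actual set. -/
theorem stmt_16 :
    ∀ v : Op → ℝ, IsGisin v →
      ∃ w : Op → ℝ, IsGisin w ∧ (∃ P, IsOrthProj P ∧ w P ≠ v P) ∧
        {P | IsOrthProj P ∧ w P = 1} = {P | IsOrthProj P ∧ v P = 1} := by
  intro v hv
  classical
  obtain ⟨P₀, hP₀, hgt, hlt⟩ := exists_mid hv
  set t : ℝ := v P₀ / 2 with ht
  have ht0 : 0 < t := by rw [ht]; linarith
  have ht1 : t < 1 := by rw [ht]; linarith
  have htne : t ≠ v P₀ := by rw [ht]; intro h; linarith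
  have hP0ne0 : P₀ ≠ 0 := by
    rintro rfl; rw [gpm_zero hv.1] at hgt; exact lt_irrefl 0 hgt
  have hP0ne1 : P₀ ≠ 1 := by
    rintro rfl; rw [hv.1.2.1] at hlt; exact lt_irrefl 1 hlt
  have hcompl := comp_compl hP₀.2
  have hC : IsOrthProj (1 - P₀) := orthProj_compl hP₀
  have hvpair : v P₀ + v (1 - P₀) = 1 :=
    gpm_pair hv.1 hP₀ hC hcompl.1 hcompl.2 (by abel)
  have hvC : v (1 - P₀) = 1 - v P₀ := by linarith
  have hne : (1 : Op) - P₀ ≠ P₀ := by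
    intro h
    obtain ⟨x, hx0, hx⟩ := exists_fixed hP₀.2 hP0ne0
    have h2 : ((1 : Op) - P₀) x = P₀ x := by rw [h]
    have e : ((1 : Op) - P₀) x = x - P₀ x := rfl
    rw [e, hx, sub_self] at h2
    exact hx0 h2.symm
  have hCne0 : (1 : Op) - P₀ ≠ 0 := fun h => hP0ne1 (sub_eq_zero.mp h).symm
  have hCne1 : (1 : Op) - P₀ ≠ 1 := fun h => hP0ne0 (by
    have := sub_eq_zero.mpr h.symm
    rwa [sub_sub_cancel] at this)
  set w : Op → ℝ := fun Q => if Q = P₀ then t else if Q = 1 - P₀ then 1 - t else v Q with hwdef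
  have hwP0 : w P₀ = t := by simp [hwdef]
  have hwC : w (1 - P₀) = 1 - t := by simp [hwdef, hne]
  have hwother : ∀ Q, Q ≠ P₀ → Q ≠ 1 - P₀ → w Q = v Q := fun Q h1 h2 => by
    simp [hwdef, h1, h2]
  have hw0 : w 0 = 0 := by
    rw [hwother 0 (Ne.symm hP0ne0) (Ne.symm hCne0), gpm_zero hv.1]
  have hw1 : w 1 = 1 := by
    rw [hwother 1 (Ne.symm hP0ne1) (Ne.symm hCne1), hv.1.2.1]
  have hwpair : ∀ Q : Op, IsOrthProj Q → w Q + w (1 - Q) = 1 := by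
    intro Q hQ
    by_cases h1 : Q = P₀
    · subst h1; rw [hwP0, hwC]; ring
    by_cases h2 : Q = 1 - P₀
    · subst h2; rw [sub_sub_cancel, hwC, hwP0]; ring
    · have h3 : 1 - Q ≠ P₀ := fun h => h2 (by rw [← h, sub_sub_cancel])
      have h4 : 1 - Q ≠ 1 - P₀ := fun h => h1 (by
        have := sub_eq_zero.mpr h
        rw [sub_sub_sub_cancel_left] at this
        exact (sub_eq_zero.mp this).symm)
      rw [hwother Q h1 h2, hwother _ h3 h4]
      exact gpm_pair hv.1 hQ (orthProj_compl hQ) (comp_compl hQ.2).1 (comp_compl hQ.2).2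
        (by abel)
  refine ⟨w, ⟨⟨?_, hw1, ?_⟩, ?_⟩, ⟨P₀, hP₀, by rw [hwP0]; exact htne⟩, ?_⟩
  · -- range
    intro P hP
    by_cases h1 : P = P₀
    · subst h1; rw [hwP0]; exact ⟨le_of_lt ht0, le_of_lt ht1⟩
    by_cases h2 : P = 1 - P₀
    · subst h2; rw [hwC]; constructor <;> linarith
    · rw [hwother P h1 h2]; exact hv.1.1 P hP
  · -- additivity
    intro n Ps hproj hpair _
    by_cases hex : ∃ i j, i ≠ j ∧ Ps i ≠ 0 ∧ Ps j ≠ 0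
    · obtain ⟨i, j, hij, hi0, hj0⟩ := hex
      have hd := two_decomp (hproj i) (hproj j) (hpair hij) (hpair hij.symm) hi0 hj0
      have hz : ∀ k, k ≠ i → k ≠ j → Ps k = 0 := fun k hki hkj =>
        hd.2 (Ps k) (hpair hki) (hpair hkj)
      have hsum1 : (∑ k, Ps k) = Ps i + Ps j :=
        Finset.sum_eq_add_of_mem i j (Finset.mem_univ i) (Finset.mem_univ j) hij
          (fun c _ hc => hz c hc.1 hc.2)
      have hsum2 : (∑ k, w (Ps k)) = w (Ps i) + w (Ps j) :=
        Finset.sum_eq_add_of_mem i j (Finset.mem_univ i) (Finset.mem_univ j) hij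
          (fun c _ hc => by rw [hz c hc.1 hc.2, hw0])
      have hj' : Ps j = 1 - Ps i := by rw [← hd.1]; abel
      rw [hsum1, hsum2, hd.1, hw1, hj']
      exact (hwpair (Ps i) (hproj i)).symm
    · by_cases hex2 : ∃ i, Ps i ≠ 0
      · obtain ⟨i, hi⟩ := hex2
        have hz : ∀ k, k ≠ i → Ps k = 0 := by
          intro k hk
          by_contra hk0
          exact hex ⟨k, i, hk, hk0, hi⟩
        rw [Finset.sum_eq_single_of_mem i (Finset.mem_univ i)
            (fun k _ hk => hz k hk),
          Finset.sum_eq_single_of_mem i (Finset.mem_univ i)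
            (fun k _ hk => by rw [hz k hk, hw0])]
      · push_neg at hex2
        rw [Finset.sum_eq_zero (fun k _ => hex2 k),
          Finset.sum_eq_zero (fun k _ => by rw [hex2 k, hw0]), hw0]
  · -- Gisin condition for w
    intro K hKproj hK1
    have hKv : ∀ P ∈ K, v P = 1 := by
      intro P hPK
      have hw1' := hK1 P hPK
      by_cases h1 : P = P₀
      · subst h1; rw [hwP0] at hw1'; exact absurd hw1' (by intro h; linarith)
      by_cases h2 : P = 1 - P₀
      · subst h2; rw [hwC] at hw1'; exact absurd hw1' (by intro h; linarith)
      · rwa [hwother P h1 h2] at hw1'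
    have hres := hv.2 K hKproj hKv
    set R : Op := projOnto (⨅ P ∈ K, LinearMap.range (P : H2 →ₗ[ℂ] H2))
    have hR1 : R ≠ P₀ := fun h => by rw [h] at hres; linarith
    have hR2 : R ≠ 1 - P₀ := fun h => by rw [h, hvC] at hres; linarith
    rw [hwother R hR1 hR2]
    exact hres
  · -- same actual set
    ext P
    simp only [Set.mem_setOf_eq]
    constructor
    · rintro ⟨hP, hPw⟩
      refine ⟨hP, ?_⟩
      by_cases h1 : P = P₀
      · subst h1; rw [hwP0] at hPw; linarith
      by_cases h2 : P = 1 - P₀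
      · subst h2; rw [hwC] at hPw; linarith
      · rwa [hwother P h1 h2] at hPw
    · rintro ⟨hP, hPv⟩
      refine ⟨hP, ?_⟩
      have h1 : P ≠ P₀ := fun h => by rw [h] at hPv; linarith
      have h2 : P ≠ 1 - P₀ := fun h => by rw [h, hvC] at hPv; linarith
      rw [hwother P h1 h2]
      exact hPv
end

section
/- Let Π be a rank-one orthogonal projection on ℂ². Define w : P(ℂ²) → [0,1] by w(0) = 0, w(I) = 1, w(Π) = 1, w(I − Π) = 0, and w(Π') = 1/2 for every rank-one projection Π' ∉ {Π, I − Π}; and define v₁ : P(ℂ²) → [0,1] by v₁(Π') = Tr(Π'Π). Then both w and v₁ are generalized probability measures on P(ℂ²), w ≠ v₁, and they have the same actual set A_w = A_{v₁} = {Π, I}. -/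
open scoped ComplexInnerProductSpace Classical

namespace QT2Aux
open QT2

lemma sym {Q : Op} (h : IsOrthProj Q) (x y : H2) : ⟪Q x, y⟫ = ⟪x, Q y⟫ :=
  h.1.isSymmetric x y

lemma idem {Q : Op} (h : IsOrthProj Q) (x : H2) : Q (Q x) = Q x :=
  DFunLike.congr_fun h.2 x

lemma apply_mem_range (Q : Op) (x : H2) : Q x ∈ LinearMap.range (Q : H2 →ₗ[ℂ] H2) :=
  LinearMap.mem_range_self _ x

lemma idem_of_mem {Q : Op} (h : IsOrthProj Q) {x : H2} (hx : x ∈ LinearMap.range (Q : H2 →ₗ[ℂ] H2)) :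
    Q x = x := by
  obtain ⟨y, rfl⟩ := hx
  exact idem h y

lemma inner_self_apply {Q : Op} (h : IsOrthProj Q) (x : H2) :
    ⟪x, Q x⟫ = (‖Q x‖ ^ 2 : ℝ) := by
  rw [← idem h x, ← sym h, idem h x, inner_self_eq_norm_sq_to_K]
  norm_cast

lemma inner_sub_apply {Q : Op} (h : IsOrthProj Q) (x y : H2) :
    ⟪Q y, x - Q x⟫ = 0 := by
  rw [sym h, map_sub, idem h, sub_self, inner_zero_right]

lemma normsq_split {Q : Op} (h : IsOrthProj Q) (x : H2) :
    ‖x‖ ^ 2 = ‖Q x‖ ^ 2 + ‖x - Q x‖ ^ 2 := by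
  have hx : x = Q x + (x - Q x) := by abel
  have horth : ⟪Q x, x - Q x⟫ = 0 := inner_sub_apply h x x
  calc ‖x‖ ^ 2 = ‖Q x + (x - Q x)‖ ^ 2 := by rw [← hx]
    _ = ‖Q x‖ ^ 2 + ‖x - Q x‖ ^ 2 := by
        have := norm_add_sq_eq_norm_sq_add_norm_sq_of_inner_eq_zero _ _ horth
        nlinarith [this]

lemma norm_apply_le {Q : Op} (h : IsOrthProj Q) (x : H2) : ‖Q x‖ ^ 2 ≤ ‖x‖ ^ 2 := by
  have := normsq_split h x
  nlinarith [sq_nonneg ‖x - Q x‖]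

lemma eq_of_range_eq {Q Q' : Op} (hQ : IsOrthProj Q) (hQ' : IsOrthProj Q')
    (h : LinearMap.range (Q : H2 →ₗ[ℂ] H2) = LinearMap.range (Q' : H2 →ₗ[ℂ] H2)) : Q = Q' := by
  have key : ∀ x, Q' x = Q x := by
    intro x
    have h1 : Q' (Q x) = Q x := idem_of_mem hQ' (h ▸ apply_mem_range Q x)
    have h2 : Q' (x - Q x) = 0 := by
      have hn : ⟪Q' (x - Q x), Q' (x - Q x)⟫ = 0 := by
        rw [sym hQ', idem hQ']
        have : Q' (x - Q x) ∈ LinearMap.range (Q : H2 →ₗ[ℂ] H2) := h ▸ apply_mem_range Q' _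
        obtain ⟨y, hy⟩ := this
        rw [← hy, ContinuousLinearMap.coe_coe, ← sym hQ, map_sub, idem hQ, sub_self, inner_zero_left]
      rwa [inner_self_eq_zero] at hn
    have : Q' x = Q' (Q x) + Q' (x - Q x) := by rw [← map_add]; congr 1; abel
    rw [this, h1, h2, add_zero]
  exact (ContinuousLinearMap.ext key).symm

lemma rank_two_eq_one {Q : Op} (hQ : IsOrthProj Q)
    (h : Module.finrank ℂ (LinearMap.range (Q : H2 →ₗ[ℂ] H2)) = 2) : Q = 1 := by
  have htop : LinearMap.range (Q : H2 →ₗ[ℂ] H2) = ⊤ :=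
    Submodule.eq_top_of_finrank_eq (by rw [h, finrank_euclideanSpace_fin])
  refine ContinuousLinearMap.ext fun x => ?_
  have : x ∈ LinearMap.range (Q : H2 →ₗ[ℂ] H2) := htop ▸ Submodule.mem_top
  simpa using idem_of_mem hQ this

lemma orth_inner {A B : Op} (hA : IsOrthProj A) (hAB : A ∘L B = 0) (x y : H2) :
    ⟪A x, B y⟫ = 0 := by
  rw [sym hA]
  have : A (B y) = 0 := DFunLike.congr_fun hAB y
  rw [show A (B y) = (0 : H2) from this, inner_zero_right]

lemma one_le_rank {Q : Op} (hQ : Q ≠ 0) : 1 ≤ Module.finrank ℂ (LinearMap.range (Q : H2 →ₗ[ℂ] H2)) := by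
  have : ∃ x, Q x ≠ 0 := by
    by_contra h
    push_neg at h
    exact hQ (ContinuousLinearMap.ext fun x => by simpa using h x)
  obtain ⟨x, hx⟩ := this
  have hle : (ℂ ∙ Q x) ≤ LinearMap.range (Q : H2 →ₗ[ℂ] H2) :=
    (Submodule.span_singleton_le_iff_mem _ _).2 (apply_mem_range Q x)
  calc 1 = Module.finrank ℂ (ℂ ∙ Q x) := (finrank_span_singleton hx).symm
    _ ≤ Module.finrank ℂ (LinearMap.range (Q : H2 →ₗ[ℂ] H2)) := Submodule.finrank_mono hle

lemma trace_formula {u f : H2} (hon : Orthonormal ℂ ![u, f]) (T : H2 →ₗ[ℂ] H2) :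
    LinearMap.trace ℂ H2 T = ⟪u, T u⟫ + ⟪f, T f⟫ := by
  have hcard : Fintype.card (Fin 2) = Module.finrank ℂ H2 := by
    simp [finrank_euclideanSpace_fin]
  let b : Module.Basis (Fin 2) ℂ H2 := basisOfOrthonormalOfCardEqFinrank hon hcard
  have hb : ⇑b = ![u, f] := coe_basisOfOrthonormalOfCardEqFinrank hon hcard
  have honb : Orthonormal ℂ ⇑b := hb ▸ hon
  have hrepr : ∀ (y : H2) (i : Fin 2), b.repr y i = ⟪b i, y⟫ := by
    intro y i
    have h1 : ⟪b i, ∑ j, b.repr y j • b j⟫ = b.repr y i := by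
      rw [inner_sum]
      simp_rw [inner_smul_right, orthonormal_iff_ite.mp honb]
      simp
    rw [b.sum_repr y] at h1
    exact h1.symm
  rw [LinearMap.trace_eq_matrix_trace ℂ b T, Matrix.trace]
  simp only [Matrix.diag_apply, LinearMap.toMatrix_apply]
  rw [Fin.sum_univ_two]
  rw [hrepr, hrepr, hb]
  simp

end QT2Aux

set_option maxHeartbeats 1000000 in
open QT2 in
/-- For a rank-one projection `Π₀` on `ℂ²`, the map `w` assigning `1` to `Π₀`
and `I`, `0` to `0` and `I − Π₀`, and `1/2` to every other rank-one projection, and the map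
`v₁ : Q ↦ Tr(QΠ₀)`, are both generalized probability measures on `P(ℂ²)`; they differ on some
projection yet have the same actual set `{Π₀, I}`. -/
theorem stmt_17 (P0 : Op) (hP0 : IsOrthProj P0)
    (hrank : Module.finrank ℂ (LinearMap.range (P0 : H2 →ₗ[ℂ] H2)) = 1)
    (w v₁ : Op → ℝ)
    (hw : w = fun Q =>
      if Q = P0 then 1 else if Q = 1 then 1 else if Q = 0 then 0
      else if Q = 1 - P0 then 0 else 1 / 2)
    (hv₁ : v₁ = fun Q => (LinearMap.trace ℂ H2 ((Q ∘L P0 : Op) : H2 →ₗ[ℂ] H2)).re) :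
    IsGPM2 w ∧ IsGPM2 v₁ ∧ (∃ Q, IsOrthProj Q ∧ w Q ≠ v₁ Q) ∧
      {Q | IsOrthProj Q ∧ w Q = 1} = {Q | IsOrthProj Q ∧ v₁ Q = 1} ∧
      {Q | IsOrthProj Q ∧ w Q = 1} = {P0, (1 : Op)} := by
  classical
  open QT2Aux in
  -- basic dimension fact
  have hfd : Module.finrank ℂ H2 = 2 := finrank_euclideanSpace_fin
  -- a unit vector spanning the range of P0
  have hne : LinearMap.range (P0 : H2 →ₗ[ℂ] H2) ≠ ⊥ := by
    intro h; rw [h, finrank_bot] at hrank; exact absurd hrank (by norm_num)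
  obtain ⟨v, hvmem, hv0⟩ := (Submodule.ne_bot_iff _).1 hne
  obtain ⟨u, hunorm, humem⟩ : ∃ u : H2, ‖u‖ = 1 ∧ u ∈ LinearMap.range (P0 : H2 →ₗ[ℂ] H2) :=
    ⟨(‖v‖ : ℂ)⁻¹ • v, norm_smul_inv_norm hv0, Submodule.smul_mem _ _ hvmem⟩
  have hune : u ≠ 0 := by
    intro h; rw [h, norm_zero] at hunorm; exact absurd hunorm (by norm_num)
  have hspanu : LinearMap.range (P0 : H2 →ₗ[ℂ] H2) = ℂ ∙ u := by
    symm
    apply Submodule.eq_of_le_of_finrank_eq ((Submodule.span_singleton_le_iff_mem _ _).2 humem)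
    rw [finrank_span_singleton hune, hrank]
  have hP0u : P0 u = u := idem_of_mem hP0 humem
  have hP0apply : ∀ x, P0 x = ⟪u, x⟫ • u := by
    intro x
    obtain ⟨c, hc⟩ := Submodule.mem_span_singleton.1 (hspanu ▸ apply_mem_range P0 x)
    have hcval : ⟪u, P0 x⟫ = c := by
      rw [← hc, inner_smul_right, inner_self_eq_norm_sq_to_K, hunorm]
      norm_num
    have hup : ⟪u, P0 x⟫ = ⟪u, x⟫ := by rw [← sym hP0, hP0u]
    rw [← hc, ← hcval, hup]
  -- a unit vector orthogonal to u
  have horthbot : ((ℂ ∙ u)ᗮ : Submodule ℂ H2) ≠ ⊥ := by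
    intro h
    have h1 := Submodule.finrank_add_finrank_orthogonal (K := (ℂ ∙ u : Submodule ℂ H2))
    rw [h, finrank_bot, finrank_span_singleton hune, hfd] at h1
    exact absurd h1 (by norm_num)
  obtain ⟨g, hgmem, hg0⟩ := (Submodule.ne_bot_iff _).1 horthbot
  obtain ⟨f, hfnorm, huf⟩ : ∃ f : H2, ‖f‖ = 1 ∧ ⟪u, f⟫ = 0 := by
    refine ⟨(‖g‖ : ℂ)⁻¹ • g, norm_smul_inv_norm hg0, ?_⟩
    have h1 : ⟪u, g⟫ = 0 :=
      (Submodule.mem_orthogonal _ g).1 hgmem u (Submodule.mem_span_singleton_self u)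
    rw [inner_smul_right, h1, mul_zero]
  have hfu : ⟪f, u⟫ = 0 := by rw [← inner_conj_symm, huf, map_zero]
  have hon : Orthonormal ℂ ![u, f] := by
    rw [orthonormal_iff_ite]
    intro i j
    fin_cases i <;> fin_cases j <;>
      simp [huf, hfu, inner_self_eq_norm_sq_to_K, hunorm, hfnorm]
  have hP0f : P0 f = 0 := by rw [hP0apply, huf, zero_smul]
  -- value of v₁ on projections
  have hv1val : ∀ Q : Op, IsOrthProj Q → v₁ Q = ‖Q u‖ ^ 2 := by
    intro Q hQ
    simp only [hv₁]
    have htr : LinearMap.trace ℂ H2 ((Q ∘L P0 : Op) : H2 →ₗ[ℂ] H2)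
        = ⟪u, Q (P0 u)⟫ + ⟪f, Q (P0 f)⟫ := by
      rw [trace_formula hon]
      rfl
    rw [htr, hP0u, hP0f, map_zero, inner_zero_right, add_zero, inner_self_apply hQ]
    exact Complex.ofReal_re _
  -- identity is a projection
  have hproj1 : IsOrthProj (1 : Op) := by
    refine ⟨?_, ContinuousLinearMap.ext fun x => rfl⟩
    exact IsSelfAdjoint.one Op
  have hone_u : (1 : Op) u = u := rfl
  have hv1one : v₁ 1 = 1 := by
    rw [hv1val 1 hproj1, hone_u, hunorm]; norm_num
  -- inequalities among P0, 1, 0, 1 - P0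
  have hP0ne1 : P0 ≠ 1 := by
    intro h
    have hr1 : LinearMap.range ((1 : Op) : H2 →ₗ[ℂ] H2) = ⊤ := by
      rw [Submodule.eq_top_iff']; intro x; exact ⟨x, rfl⟩
    rw [h, hr1, finrank_top, hfd] at hrank
    exact absurd hrank (by norm_num)
  have hP0ne0 : P0 ≠ 0 := by
    intro h
    have hr0 : LinearMap.range ((0 : Op) : H2 →ₗ[ℂ] H2) = ⊥ := by
      rw [Submodule.eq_bot_iff]
      rintro x ⟨y, rfl⟩
      rfl
    rw [h, hr0, finrank_bot] at hrank
    exact absurd hrank (by norm_num)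
  have h1ne0 : (1 : Op) ≠ 0 := by
    intro h
    have h2 := DFunLike.congr_fun h u
    simp only [ContinuousLinearMap.one_apply, ContinuousLinearMap.zero_apply] at h2
    exact hune h2
  have hsub0 : (1 : Op) - P0 ≠ 0 := by
    intro h; exact hP0ne1 (sub_eq_zero.1 h).symm
  have hsub1 : (1 : Op) - P0 ≠ 1 := by
    intro h; exact hP0ne0 (sub_eq_self.1 h)
  have hsubP0 : (1 : Op) - P0 ≠ P0 := by
    intro h
    have h1 := DFunLike.congr_fun h u
    rw [ContinuousLinearMap.sub_apply, hP0u] at h1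
    simp only [ContinuousLinearMap.one_apply, sub_self] at h1
    exact hune h1.symm
  -- evaluations of w
  have hweval0 : w 0 = 0 := by
    simp only [hw]
    rw [if_neg (Ne.symm hP0ne0), if_neg (Ne.symm h1ne0)]
    simp
  have hwevalP0 : w P0 = 1 := by simp only [hw]; simp
  have hweval1 : w 1 = 1 := by
    simp only [hw]; rw [if_neg (Ne.symm hP0ne1)]; simp
  have hwevalsub : w (1 - P0) = 0 := by
    simp only [hw]
    rw [if_neg hsubP0, if_neg hsub1, if_neg hsub0]
    simp
  -- the complement identity for w
  have hwcomp : ∀ A : Op, A ≠ 0 → A ≠ 1 → w A + w (1 - A) = 1 := by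
    intro A hA0 hA1
    by_cases hAP : A = P0
    · rw [hAP, hwevalP0, hwevalsub]; norm_num
    by_cases hAP' : A = 1 - P0
    · rw [hAP', sub_sub_cancel, hwevalP0]
      have : w (1 - P0) = 0 := hwevalsub
      rw [this]; norm_num
    have hwA : w A = 1 / 2 := by
      simp only [hw]
      rw [if_neg hAP, if_neg hA1, if_neg hA0, if_neg hAP']
    have hwA' : w (1 - A) = 1 / 2 := by
      simp only [hw]
      rw [if_neg, if_neg, if_neg, if_neg]
      · intro h; exact hAP (sub_right_inj.1 h)
      · intro h; exact hA1 (sub_eq_zero.1 h).symm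
      · intro h; exact hA0 (sub_eq_self.1 h)
      · intro h; exact hAP' (by rw [← sub_sub_cancel 1 A, h])
    rw [hwA, hwA']; norm_num
  -- IsGPM2 w
  have hGPMw : IsGPM2 w := by
    refine ⟨?_, hweval1, ?_⟩
    · intro P _
      simp only [hw]
      split_ifs <;> constructor <;> norm_num
    · intro n Ps hPs hortho hsum
      set S := Finset.univ.filter (fun j => Ps j ≠ 0) with hSdef
      have hmemS : ∀ j ∈ S, Ps j ≠ 0 := fun j hj => (Finset.mem_filter.1 hj).2
      have hsum1 : (∑ j, Ps j) = ∑ j ∈ S, Ps j :=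
        (Finset.sum_filter_of_ne (fun x _ hx => hx)).symm
      have hsum2 : (∑ j, w (Ps j)) = ∑ j ∈ S, w (Ps j) := by
        refine (Finset.sum_filter_of_ne ?_).symm
        intro x _ hx h0
        exact hx (by rw [h0, hweval0])
      have hcard : S.card ≤ 2 := by
        by_contra hc
        push_neg at hc
        obtain ⟨a, ha, b, hb, c, hcS, hab, hac, hbc⟩ := Finset.two_lt_card.1 hc
        have hunit : ∀ j ∈ S, ∃ z : H2, ‖z‖ = 1 ∧ z ∈ LinearMap.range ((Ps j) : H2 →ₗ[ℂ] H2) := by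
          intro j hj
          have hex : ∃ x, Ps j x ≠ 0 := by
            by_contra h
            push_neg at h
            exact hmemS j hj (ContinuousLinearMap.ext fun x => by simpa using h x)
          obtain ⟨x, hx⟩ := hex
          exact ⟨(‖Ps j x‖ : ℂ)⁻¹ • Ps j x, norm_smul_inv_norm hx,
            Submodule.smul_mem _ _ (apply_mem_range _ x)⟩
        obtain ⟨za, hza, hzam⟩ := hunit a ha
        obtain ⟨zb, hzb, hzbm⟩ := hunit b hb
        obtain ⟨zc, hzc, hzcm⟩ := hunit c hcS
        have horthz : ∀ (i j : Fin n) (zi zj : H2), i ≠ j →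
            zi ∈ LinearMap.range ((Ps i) : H2 →ₗ[ℂ] H2) → zj ∈ LinearMap.range ((Ps j) : H2 →ₗ[ℂ] H2) → ⟪zi, zj⟫ = 0 := by
          intro i j zi zj hij hzi hzj
          obtain ⟨xi, rfl⟩ := hzi
          obtain ⟨xj, rfl⟩ := hzj
          exact orth_inner (hPs i) (hortho hij) xi xj
        have hontriple : Orthonormal ℂ ![za, zb, zc] := by
          rw [orthonormal_iff_ite]
          intro i j
          fin_cases i <;> fin_cases j <;>
            simp [hza, hzb, hzc, inner_self_eq_norm_sq_to_K,
              horthz a b za zb hab hzam hzbm, horthz a c za zc hac hzam hzcm,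
              horthz b c zb zc hbc hzbm hzcm, horthz b a zb za hab.symm hzbm hzam,
              horthz c a zc za hac.symm hzcm hzam, horthz c b zc zb hbc.symm hzcm hzbm]
        have hli := hontriple.linearIndependent
        have hcard3 := hli.fintype_card_le_finrank
        rw [hfd] at hcard3
        simp at hcard3
      have hcases : S.card = 0 ∨ S.card = 1 ∨ S.card = 2 := by omega
      rcases hcases with h0 | h1 | h2
      · have hS : S = ∅ := Finset.card_eq_zero.1 h0
        rw [hsum1, hsum2, hS, Finset.sum_empty, Finset.sum_empty, hweval0]
      · obtain ⟨a, hSa⟩ := Finset.card_eq_one.1 h1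
        rw [hsum1, hsum2, hSa, Finset.sum_singleton, Finset.sum_singleton]
      · obtain ⟨a, b, hab, hSab⟩ := Finset.card_eq_two.1 h2
        have haS : a ∈ S := by rw [hSab]; exact Finset.mem_insert_self a {b}
        have hbS : b ∈ S := by rw [hSab]; exact Finset.mem_insert_of_mem (Finset.mem_singleton_self b)
        have ha0 : Ps a ≠ 0 := hmemS a haS
        have hb0 : Ps b ≠ 0 := hmemS b hbS
        have hABsum : (∑ j, Ps j) = Ps a + Ps b := by
          rw [hsum1, hSab, Finset.sum_pair hab]
        have hAB : Ps a ∘L Ps b = 0 := hortho hab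
        have hBA : Ps b ∘L Ps a = 0 := hortho hab.symm
        have hrangele : LinearMap.range ((Ps a) : H2 →ₗ[ℂ] H2) ⊔ LinearMap.range ((Ps b) : H2 →ₗ[ℂ] H2)
            ≤ LinearMap.range ((Ps a + Ps b) : H2 →ₗ[ℂ] H2) := by
          apply sup_le
          · rintro x ⟨y, rfl⟩
            refine ⟨Ps a y, ?_⟩
            have h1 : Ps b (Ps a y) = 0 := DFunLike.congr_fun hBA y
            rw [LinearMap.add_apply, ContinuousLinearMap.coe_coe, ContinuousLinearMap.coe_coe, idem (hPs a), h1, add_zero]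
          · rintro x ⟨y, rfl⟩
            refine ⟨Ps b y, ?_⟩
            have h1 : Ps a (Ps b y) = 0 := DFunLike.congr_fun hAB y
            rw [LinearMap.add_apply, ContinuousLinearMap.coe_coe, ContinuousLinearMap.coe_coe, idem (hPs b), h1, zero_add]
        have hinf : LinearMap.range ((Ps a) : H2 →ₗ[ℂ] H2) ⊓ LinearMap.range ((Ps b) : H2 →ₗ[ℂ] H2) = ⊥ := by
          rw [Submodule.eq_bot_iff]
          rintro x ⟨hxa, hxb⟩
          obtain ⟨y, hy⟩ := hxa
          obtain ⟨z, hz⟩ := hxb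
          have hxx := orth_inner (hPs a) hAB y z
          rw [ContinuousLinearMap.coe_coe] at hy hz
          rw [hy, hz] at hxx
          exact inner_self_eq_zero.1 hxx
        have hfr : Module.finrank ℂ (LinearMap.range ((Ps a + Ps b) : H2 →ₗ[ℂ] H2)) = 2 := by
          have h1 := Submodule.finrank_sup_add_finrank_inf_eq
            (LinearMap.range ((Ps a) : H2 →ₗ[ℂ] H2)) (LinearMap.range ((Ps b) : H2 →ₗ[ℂ] H2))
          rw [hinf, finrank_bot, add_zero] at h1
          have h2a := one_le_rank ha0
          have h2b := one_le_rank hb0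
          have h3 := Submodule.finrank_mono hrangele
          have h4 := Submodule.finrank_le (LinearMap.range ((Ps a + Ps b) : H2 →ₗ[ℂ] H2))
          rw [hfd] at h4
          omega
        have hprojAB : IsOrthProj (Ps a + Ps b) := by rw [← hABsum]; exact hsum
        have hone : Ps a + Ps b = 1 := rank_two_eq_one hprojAB hfr
        have hBval : Ps b = 1 - Ps a := by rw [← hone]; abel
        have hAne1 : Ps a ≠ 1 := by
          intro h
          rw [h] at hone
          exact hb0 (by linear_combination (norm := abel1) hone)
        rw [hABsum, hsum2, hSab, Finset.sum_pair hab, hone, hweval1, hBval]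
        exact (hwcomp (Ps a) ha0 hAne1).symm
  -- IsGPM2 v₁
  have hGPMv : IsGPM2 v₁ := by
    refine ⟨?_, hv1one, ?_⟩
    · intro P hP
      rw [Set.mem_Icc, hv1val P hP]
      constructor
      · positivity
      · have := norm_apply_le hP u
        rw [hunorm] at this
        nlinarith
    · intro n Ps hPs hortho hsum
      simp only [hv₁]
      have h1 : ((∑ j, Ps j) ∘L P0) = ∑ j, Ps j ∘L P0 :=
        ContinuousLinearMap.finset_sum_comp _ _
      rw [h1]
      rw [show (((∑ j, Ps j ∘L P0) : Op) : H2 →ₗ[ℂ] H2)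
          = ∑ j, ((Ps j ∘L P0 : Op) : H2 →ₗ[ℂ] H2) from ContinuousLinearMap.coe_sum _ _]
      rw [map_sum, Complex.re_sum]
  -- the counterexample projection
  have hsq3 : Real.sqrt 3 * Real.sqrt 3 = 3 := Real.mul_self_sqrt (by norm_num)
  have huu : ⟪u, u⟫ = 1 := by
    rw [inner_self_eq_norm_sq_to_K, hunorm]; norm_num
  have hff : ⟪f, f⟫ = 1 := by
    rw [inner_self_eq_norm_sq_to_K, hfnorm]; norm_num
  obtain ⟨e, hee, heu⟩ : ∃ e : H2, ⟪e, e⟫ = 1 ∧ ⟪e, u⟫ = ((Real.sqrt 3 / 2 : ℝ) : ℂ) := by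
    refine ⟨((Real.sqrt 3 / 2 : ℝ) : ℂ) • u + ((1 / 2 : ℝ) : ℂ) • f, ?_, ?_⟩
    · simp only [inner_add_left, inner_add_right, inner_smul_left, inner_smul_right,
        huf, hfu, huu, hff, mul_zero, mul_one, add_zero, zero_add, Complex.conj_ofReal]
      rw [← Complex.ofReal_mul, ← Complex.ofReal_mul, ← Complex.ofReal_add]
      norm_cast
      nlinarith [hsq3]
    · simp only [inner_add_left, inner_smul_left, huu, hfu, mul_zero, mul_one, add_zero,
        Complex.conj_ofReal]
  have henorm : ‖e‖ ^ 2 = 1 := by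
    have h1 := inner_self_eq_norm_sq (𝕜 := ℂ) (E := H2) e
    rw [hee] at h1
    simpa using h1.symm
  obtain ⟨Qc, hQcproj, hQcu⟩ :
      ∃ Qc : Op, IsOrthProj Qc ∧ Qc u = ((Real.sqrt 3 / 2 : ℝ) : ℂ) • e := by
    refine ⟨projOnto (ℂ ∙ e), ⟨?_, ?_⟩, ?_⟩
    · exact isSelfAdjoint_starProjection (ℂ ∙ e)
    · refine ContinuousLinearMap.ext fun x => ?_
      show ((ℂ ∙ e).subtypeL ∘L (ℂ ∙ e).orthogonalProjectionOnto)
          (((ℂ ∙ e).subtypeL ∘L (ℂ ∙ e).orthogonalProjectionOnto) x)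
        = ((ℂ ∙ e).subtypeL ∘L (ℂ ∙ e).orthogonalProjectionOnto) x
      simp only [ContinuousLinearMap.comp_apply, Submodule.subtypeL_apply]
      congr 1
      exact Submodule.orthogonalProjectionOnto_mem_subspace_eq_self _
    · show ((ℂ ∙ e).subtypeL ∘L (ℂ ∙ e).orthogonalProjectionOnto) u = _
      simp only [ContinuousLinearMap.comp_apply, Submodule.subtypeL_apply]
      rw [show (((ℂ ∙ e).orthogonalProjectionOnto u : H2)) = (ℂ ∙ e).starProjection u from rfl,
        Submodule.starProjection_singleton ℂ, henorm, heu]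
      norm_num
  have hv1Qc : v₁ Qc = 3 / 4 := by
    rw [hv1val Qc hQcproj, hQcu, norm_smul]
    have h3 : 0 ≤ Real.sqrt 3 := Real.sqrt_nonneg 3
    have henorm' : ‖e‖ = 1 := by nlinarith [norm_nonneg e]
    rw [henorm', mul_one, Complex.norm_real, Real.norm_eq_abs,
      abs_of_nonneg (by positivity), div_pow,
      show Real.sqrt 3 ^ 2 = 3 from by nlinarith [hsq3]]
    norm_num
  have hcounter : ∃ Q, IsOrthProj Q ∧ w Q ≠ v₁ Q := by
    refine ⟨Qc, hQcproj, ?_⟩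
    rw [hv1Qc]
    simp only [hw]
    split_ifs <;> norm_num
  -- the actual sets
  have hv1P0 : v₁ P0 = 1 := by
    rw [hv1val P0 hP0, hP0u, hunorm]; norm_num
  have hAw : {Q | IsOrthProj Q ∧ w Q = 1} = {P0, (1 : Op)} := by
    ext Q
    simp only [Set.mem_setOf_eq, Set.mem_insert_iff, Set.mem_singleton_iff]
    constructor
    · rintro ⟨hQ, hQ1⟩
      simp only [hw] at hQ1
      split_ifs at hQ1 with h1 h2 h3 h4
      · exact Or.inl h1
      · exact Or.inr h2
      · norm_num at hQ1
      · norm_num at hQ1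
      · norm_num at hQ1
    · rintro (rfl | rfl)
      · exact ⟨hP0, hwevalP0⟩
      · exact ⟨hproj1, hweval1⟩
  have hAv : {Q | IsOrthProj Q ∧ v₁ Q = 1} = {P0, (1 : Op)} := by
    ext Q
    simp only [Set.mem_setOf_eq, Set.mem_insert_iff, Set.mem_singleton_iff]
    constructor
    · rintro ⟨hQ, hQ1⟩
      rw [hv1val Q hQ] at hQ1
      have hQuu : Q u = u := by
        have hsplit := normsq_split hQ u
        rw [hunorm, hQ1] at hsplit
        have : ‖u - Q u‖ = 0 := by nlinarith [norm_nonneg (u - Q u)]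
        have h0 : u - Q u = 0 := norm_eq_zero.1 this
        have := sub_eq_zero.1 h0
        exact this.symm
      have humemQ : u ∈ LinearMap.range (Q : H2 →ₗ[ℂ] H2) := ⟨u, hQuu⟩
      have hr1 : 1 ≤ Module.finrank ℂ (LinearMap.range (Q : H2 →ₗ[ℂ] H2)) := by
        have h6 := Submodule.finrank_mono
          ((Submodule.span_singleton_le_iff_mem _ _).2 humemQ)
        rwa [finrank_span_singleton hune] at h6
      have hr2 : Module.finrank ℂ (LinearMap.range (Q : H2 →ₗ[ℂ] H2)) ≤ 2 := by
        have := Submodule.finrank_le (LinearMap.range (Q : H2 →ₗ[ℂ] H2))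
        rwa [hfd] at this
      rcases Nat.eq_or_lt_of_le hr1 with h1 | h1
      · left
        have hrQ : LinearMap.range (Q : H2 →ₗ[ℂ] H2) = ℂ ∙ u := by
          symm
          apply Submodule.eq_of_le_of_finrank_eq
            ((Submodule.span_singleton_le_iff_mem _ _).2 humemQ)
          rw [finrank_span_singleton hune, ← h1]
        exact eq_of_range_eq hQ hP0 (hrQ.trans hspanu.symm)
      · right
        have hrQ : Module.finrank ℂ (LinearMap.range (Q : H2 →ₗ[ℂ] H2)) = 2 := by omega
        exact rank_two_eq_one hQ hrQ
    · rintro (rfl | rfl)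
      · exact ⟨hP0, hv1P0⟩
      · exact ⟨hproj1, hv1one⟩
  exact ⟨hGPMw, hGPMv, hcounter, hAw.trans hAv.symm, hAw⟩
end

section
/- The aNU bit violates intermediate determinism in the strongest sense: with S_B = {(x, 1) ∈ ℝ² : −1 ≤ x ≤ 1} and 𝓔_{aB} = {e ∈ ℝ² : ‖e − (1/2, 1/2)‖ ≤ 1/√2 and ‖e − (−1/2, 1/2)‖ ≤ 1/√2} (the intersection of the two closed discs of radius 1/√2 centred at (±1/2, 1/2)), for every ω ∈ S_B the actual set A^{𝓔_{aB}}_ω = {e ∈ 𝓔_{aB} : e·ω = 1} equals the singleton {(0,1)}. In particular, no two distinct states of S_B are distinguished by their actual sets. -/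
open scoped RealInnerProductSpace

namespace ANU

/-- A point of the Euclidean plane `ℝ²`. -/
def pt (a b : ℝ) : EuclideanSpace ℝ (Fin 2) := !₂[a, b]

/-- The bit state space `S_B = {(x, 1) : −1 ≤ x ≤ 1}`. -/
def SB : Set (EuclideanSpace ℝ (Fin 2)) := {ω | -1 ≤ ω 0 ∧ ω 0 ≤ 1 ∧ ω 1 = 1}

/-- The aNU bit effect space: the intersection of the two closed Euclidean discs of radius
`1/√2` centred at `(±1/2, 1/2)`. -/
def EaB : Set (EuclideanSpace ℝ (Fin 2)) :=
  {e | ‖e - pt (1 / 2) (1 / 2)‖ ≤ 1 / Real.sqrt 2 ∧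
       ‖e - pt (-(1 / 2)) (1 / 2)‖ ≤ 1 / Real.sqrt 2}

/-- The actual set of a state `ω` in the aNU bit effect space. -/
def actualSet (ω : EuclideanSpace ℝ (Fin 2)) : Set (EuclideanSpace ℝ (Fin 2)) :=
  {e ∈ EaB | ⟪e, ω⟫ = 1}


lemma norm_le_iff (e : EuclideanSpace ℝ (Fin 2)) (a b : ℝ) :
    ‖e - pt a b‖ ≤ 1 / Real.sqrt 2 ↔ (e 0 - a)^2 + (e 1 - b)^2 ≤ 1/2 := by
  have h : (1 : ℝ) / Real.sqrt 2 = Real.sqrt (1/2) := by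
    rw [one_div, ← Real.sqrt_inv]; norm_num
  rw [EuclideanSpace.norm_eq, h,
    Real.sqrt_le_sqrt_iff (by positivity)]
  simp [Fin.sum_univ_two, pt, sq_abs]

lemma inner_eq (e ω : EuclideanSpace ℝ (Fin 2)) :
    ⟪e, ω⟫ = e 0 * ω 0 + e 1 * ω 1 := by
  simp [PiLp.inner_apply, Fin.sum_univ_two, mul_comm]

end ANU

open ANU in
/-- In the aNU bit, the actual set of every state `ω ∈ S_B` is the singleton
consisting of the unit effect `u = (0,1)`; in particular, no two distinct states of `S_B` are
distinguished by their actual sets. -/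
theorem stmt_18 :
    (∀ ω ∈ SB, actualSet ω = {pt 0 1}) ∧
    ∀ ω ∈ SB, ∀ ω' ∈ SB, actualSet ω = actualSet ω' := by
  have main : ∀ ω ∈ SB, actualSet ω = {pt 0 1} := by
    rintro ω ⟨hx1, hx2, hω1⟩
    ext e
    simp only [actualSet, EaB, Set.mem_setOf_eq, Set.mem_sep_iff, Set.mem_singleton_iff,
      norm_le_iff, inner_eq, hω1, mul_one]
    constructor
    · rintro ⟨⟨h1, h2⟩, h3⟩
      have he1 : e 1 = 1 - e 0 * ω 0 := by linarith
      rw [he1] at h1 h2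
      have he0 : e 0 = 0 := by
        have hle : e 0 ≤ 0 := by
          by_contra h
          push_neg at h
          nlinarith [mul_nonneg h.le (sub_nonneg.2 hx2), mul_pos h h,
            sq_nonneg (e 0 * ω 0)]
        have hge : 0 ≤ e 0 := by
          by_contra h
          push_neg at h
          nlinarith [mul_nonneg (neg_nonneg.2 h.le) (by linarith : (0:ℝ) ≤ 1 + ω 0),
            mul_pos (neg_pos.2 h) (neg_pos.2 h), sq_nonneg (e 0 * ω 0)]
        linarith
      have he1' : e 1 = 1 := by rw [he0] at h3; linarith
      ext i
      fin_cases i <;> simp [pt, he0, he1']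
    · rintro rfl
      norm_num [pt]
  exact ⟨main, fun ω hω ω' hω' => by rw [main ω hω, main ω' hω']⟩
end
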